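/- arXiv:1707.08644 — 14 statements merged into one kernel-verified Lean document; each statement's English description precedes it below -/
import Mathlib

section
/- Let X be a real random variable with mean μ, supported on an interval (a,b) (with -∞ ≤ a < b ≤ ∞), having finite variance. Let φ be twice differentiable on (a,b), and define h(x) = (φ(x) - φ(μ))/(x-μ)² - φ'(μ)/(x-μ) for x ≠ μ. Then E[φ(X)] - φ(μ) ≤ (sup_{x∈(a,b)} h(x)) · Var(X). -/
open MeasureTheory Set

/-- Sharpened Jensen upper bound: if `C` is an upper bound of
`h(x) = (φ(x)-φ(μ))/(x-μ)² - φ'(μ)/(x-μ)` over `x ∈ (a,b)`, `x ≠ μ`, then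
`E[φ(X)] - φ(μ) ≤ C · Var(X)`. -/
theorem stmt_0 {Ω : Type*} [MeasureSpace Ω] [IsProbabilityMeasure (volume : Measure Ω)]
    (a b : EReal) (hab : a < b) (X : Ω → ℝ) (φ : ℝ → ℝ) (μ C : ℝ)
    (hX : ∀ᵐ ω, a < (X ω : EReal) ∧ (X ω : EReal) < b)
    (hXint : Integrable X) (hmean : ∫ ω, X ω = μ)
    (hX2 : Integrable (fun ω => (X ω) ^ 2))
    (hφint : Integrable (fun ω => φ (X ω)))
    (hdiff : ∀ x : ℝ, a < (x : EReal) → (x : EReal) < b →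
      DifferentiableAt ℝ φ x ∧ DifferentiableAt ℝ (deriv φ) x)
    (hC : ∀ x : ℝ, a < (x : EReal) → (x : EReal) < b → x ≠ μ →
      (φ x - φ μ) / (x - μ) ^ 2 - deriv φ μ / (x - μ) ≤ C) :
    (∫ ω, φ (X ω)) - φ μ ≤ C * ∫ ω, (X ω - μ) ^ 2 := by
  have hsq : Integrable (fun ω => (X ω - μ) ^ 2) := by
    have heq : (fun ω => (X ω - μ) ^ 2)
        = fun ω => ((X ω) ^ 2 - (2 * μ) * X ω) + μ ^ 2 := by
      funext ω; ring
    rw [heq]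
    exact (hX2.sub (hXint.const_mul _)).add (integrable_const _)
  have hsub : Integrable (fun ω => X ω - μ) := hXint.sub (integrable_const μ)
  have hg : Integrable (fun ω =>
      (φ μ + deriv φ μ * (X ω - μ)) + C * (X ω - μ) ^ 2) :=
    ((integrable_const _).add (hsub.const_mul _)).add (hsq.const_mul _)
  have hle : ∀ᵐ ω, φ (X ω) ≤ (φ μ + deriv φ μ * (X ω - μ)) + C * (X ω - μ) ^ 2 := by
    filter_upwards [hX] with ω hω
    obtain ⟨h1, h2⟩ := hω
    by_cases hxm : X ω = μ
    · simp [hxm]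
    · have hs : X ω - μ ≠ 0 := sub_ne_zero.mpr hxm
      have hpos : (0 : ℝ) < (X ω - μ) ^ 2 := by positivity
      have hC' := hC (X ω) h1 h2 hxm
      have hmul := mul_le_mul_of_nonneg_right hC' hpos.le
      rw [sub_mul] at hmul
      have k1 : (φ (X ω) - φ μ) / (X ω - μ) ^ 2 * (X ω - μ) ^ 2
          = φ (X ω) - φ μ := div_mul_cancel₀ _ hpos.ne'
      have k2 : deriv φ μ / (X ω - μ) * (X ω - μ) ^ 2
          = deriv φ μ * (X ω - μ) := by
        field_simp
      rw [k1, k2] at hmul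
      linarith
  have h1 : Integrable (fun ω => φ μ + deriv φ μ * (X ω - μ)) :=
    (integrable_const _).add (hsub.const_mul _)
  have h2 : Integrable (fun ω => C * (X ω - μ) ^ 2) := hsq.const_mul _
  have h3 : Integrable (fun ω => deriv φ μ * (X ω - μ)) := hsub.const_mul _
  have hmono := integral_mono_ae hφint hg hle
  rw [integral_add h1 h2,
      integral_add (integrable_const _) h3,
      integral_const, integral_const_mul, integral_const_mul,
      integral_sub hXint (integrable_const μ), integral_const, hmean] at hmono
  simp at hmono
  linarith
end

section
/- Let X be a real random variable with mean μ, supported on an interval (a,b), with finite variance. Let φ be twice differentiable on (a,b), and define h(x) = (φ(x) - φ(μ))/(x-μ)² - φ'(μ)/(x-μ) for x ≠ μ. Then (inf_{x∈(a,b)} h(x)) · Var(X) ≤ E[φ(X)] - φ(μ). -/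
open MeasureTheory Set

/-- Sharpened Jensen lower bound: if `C` is an lower bound of
`h(x) = (φ(x)-φ(μ))/(x-μ)² - φ'(μ)/(x-μ)` over `x ∈ (a,b)`, `x ≠ μ`, then
`C · Var(X) ≤ E[φ(X)] - φ(μ)`. -/
theorem stmt_1 {Ω : Type*} [MeasureSpace Ω] [IsProbabilityMeasure (volume : Measure Ω)]
    (a b : EReal) (hab : a < b) (X : Ω → ℝ) (φ : ℝ → ℝ) (μ C : ℝ)
    (hX : ∀ᵐ ω, a < (X ω : EReal) ∧ (X ω : EReal) < b)
    (hXint : Integrable X) (hmean : ∫ ω, X ω = μ)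
    (hX2 : Integrable (fun ω => (X ω) ^ 2))
    (hφint : Integrable (fun ω => φ (X ω)))
    (hdiff : ∀ x : ℝ, a < (x : EReal) → (x : EReal) < b →
      DifferentiableAt ℝ φ x ∧ DifferentiableAt ℝ (deriv φ) x)
    (hC : ∀ x : ℝ, a < (x : EReal) → (x : EReal) < b → x ≠ μ →
      (φ x - φ μ) / (x - μ) ^ 2 - deriv φ μ / (x - μ) ≥ C) :
    C * (∫ ω, (X ω - μ) ^ 2) ≤ (∫ ω, φ (X ω)) - φ μ := by
  have hsq : Integrable (fun ω => (X ω - μ) ^ 2) := by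
    have h := (hX2.sub (hXint.const_mul (2 * μ))).add (integrable_const (μ ^ 2))
    exact h.congr (Filter.Eventually.of_forall fun ω => by simp; ring)
  have hg : Integrable (fun ω => φ (X ω) - φ μ - deriv φ μ * (X ω - μ)) := by
    exact (hφint.sub (integrable_const (φ μ))).sub
      ((hXint.sub (integrable_const μ)).const_mul (deriv φ μ))
  have hpt : ∀ᵐ ω, C * (X ω - μ) ^ 2 ≤ φ (X ω) - φ μ - deriv φ μ * (X ω - μ) := by
    filter_upwards [hX] with ω hω
    rcases eq_or_ne (X ω) μ with h | h
    · simp [h]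
    · have key := hC (X ω) hω.1 hω.2 h
      have hd : X ω - μ ≠ 0 := sub_ne_zero.mpr h
      have hd2 : (0:ℝ) < (X ω - μ) ^ 2 := by positivity
      have := mul_le_mul_of_nonneg_right key hd2.le
      calc C * (X ω - μ) ^ 2
          ≤ ((φ (X ω) - φ μ) / (X ω - μ) ^ 2 - deriv φ μ / (X ω - μ)) * (X ω - μ) ^ 2 := this
        _ = φ (X ω) - φ μ - deriv φ μ * (X ω - μ) := by field_simp
  have hmono := integral_mono_ae (hsq.const_mul C) hg hpt
  have h1 : ∫ ω, C * (X ω - μ) ^ 2 = C * ∫ ω, (X ω - μ) ^ 2 := integral_const_mul C _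
  have h2 : ∫ ω, (φ (X ω) - φ μ - deriv φ μ * (X ω - μ)) = (∫ ω, φ (X ω)) - φ μ := by
    have e1 : ∫ ω, (φ (X ω) - φ μ - deriv φ μ * (X ω - μ))
        = (∫ ω, (φ (X ω) - φ μ)) - ∫ ω, deriv φ μ * (X ω - μ) :=
      integral_sub (hφint.sub (integrable_const (φ μ)))
        ((hXint.sub (integrable_const μ)).const_mul (deriv φ μ))
    have e2 : ∫ ω, (φ (X ω) - φ μ) = (∫ ω, φ (X ω)) - φ μ := by
      rw [integral_sub hφint (integrable_const (φ μ))]; simp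
    have e3 : ∫ ω, deriv φ μ * (X ω - μ) = deriv φ μ * ∫ ω, (X ω - μ) :=
      integral_const_mul _ _
    have e4 : ∫ ω, (X ω - μ) = 0 := by
      rw [integral_sub hXint (integrable_const μ), hmean]; simp
    rw [e1, e2, e3, e4]; ring
  rw [h1, h2] at hmono
  exact hmono
end

section
/- Let X be a random variable supported on (a,b) with mean μ and finite variance, and let φ be twice differentiable on (a,b). Then (inf_{x∈(a,b)} φ''(x)/2) · Var(X) ≤ E[φ(X)] - φ(μ) ≤ (sup_{x∈(a,b)} φ''(x)/2) · Var(X). -/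
open MeasureTheory Set

private lemma key_lemma (S : Set ℝ) (hconv : Convex ℝ S) (hopen : IsOpen S)
    (φ : ℝ → ℝ) (μ m : ℝ) (hμ : μ ∈ S)
    (hdiff : ∀ x ∈ S, DifferentiableAt ℝ φ x ∧ DifferentiableAt ℝ (deriv φ) x)
    (hm : ∀ x ∈ S, 2 * m ≤ deriv (deriv φ) x) :
    ∀ x ∈ S, m * (x - μ) ^ 2 + deriv φ μ * (x - μ) + φ μ ≤ φ x := by
  set c := deriv φ μ with hc
  set g : ℝ → ℝ := fun x => φ x - φ μ - c * (x - μ) - m * (x - μ) ^ 2 with hgdef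
  set g' : ℝ → ℝ := fun x => deriv φ x - c - 2 * m * (x - μ) with hg'def
  have hg : ∀ x ∈ S, HasDerivAt g (g' x) x := by
    intro x hx
    have h1 := (hdiff x hx).1.hasDerivAt
    have h2 : HasDerivAt (fun y : ℝ => c * (y - μ)) c x := by
      simpa using ((hasDerivAt_id x).sub_const μ).const_mul c
    have h3 : HasDerivAt (fun y : ℝ => m * (y - μ) ^ 2) (m * (2 * (x - μ) ^ 1 * 1)) x := by
      exact (((hasDerivAt_id x).sub_const μ).pow 2).const_mul m
    have h := ((h1.sub_const (φ μ)).sub h2).sub h3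
    refine h.congr_deriv ?_
    show _ = deriv φ x - c - 2 * m * (x - μ); ring
  have hg' : ∀ x ∈ S, HasDerivAt g' (deriv (deriv φ) x - 2 * m) x := by
    intro x hx
    have h1 := (hdiff x hx).2.hasDerivAt
    have h2 : HasDerivAt (fun y : ℝ => 2 * m * (y - μ)) (2 * m) x := by
      simpa using ((hasDerivAt_id x).sub_const μ).const_mul (2 * m)
    have h := (h1.sub_const c).sub h2
    exact h
  have hmono : MonotoneOn g' S := by
    apply monotoneOn_of_deriv_nonneg hconv
    · intro x hx
      exact ((hg' x hx).differentiableAt).continuousAt.continuousWithinAt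
    · intro x hx
      rw [hopen.interior_eq] at hx
      exact ((hg' x hx).differentiableAt).differentiableWithinAt
    · intro x hx
      rw [hopen.interior_eq] at hx
      rw [(hg' x hx).deriv]
      have := hm x hx
      linarith
  have hgμ : g μ = 0 := by simp [hgdef]
  have hg'μ : g' μ = 0 := by simp [hg'def, hc]
  have key : ∀ x ∈ S, 0 ≤ g x := by
    intro x hx
    rcases lt_trichotomy x μ with hlt | heq | hgt
    · have hsub : Icc x μ ⊆ S := hconv.ordConnected.out hx hμ
      obtain ⟨d, hd, hdeq⟩ := exists_hasDerivAt_eq_slope g g' hlt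
        (fun y hy => ((hg y (hsub hy)).differentiableAt).continuousAt.continuousWithinAt)
        (fun y hy => hg y (hsub (Ioo_subset_Icc_self hy)))
      have hdS : d ∈ S := hsub (Ioo_subset_Icc_self hd)
      have hle : g' d ≤ g' μ := hmono hdS hμ hd.2.le
      rw [hdeq, hgμ, hg'μ] at hle
      have hpos : 0 < μ - x := by linarith
      have := (div_nonpos_iff.mp hle)
      rcases this with ⟨h1, h2⟩ | ⟨h1, h2⟩
      · linarith
      · linarith
    · rw [heq] at *; linarith [hgμ]
    · have hsub : Icc μ x ⊆ S := hconv.ordConnected.out hμ hx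
      obtain ⟨d, hd, hdeq⟩ := exists_hasDerivAt_eq_slope g g' hgt
        (fun y hy => ((hg y (hsub hy)).differentiableAt).continuousAt.continuousWithinAt)
        (fun y hy => hg y (hsub (Ioo_subset_Icc_self hy)))
      have hdS : d ∈ S := hsub (Ioo_subset_Icc_self hd)
      have hle : g' μ ≤ g' d := hmono hμ hdS hd.1.le
      rw [hdeq, hgμ, hg'μ] at hle
      have hpos : 0 < x - μ := by linarith
      have := (div_nonneg_iff.mp hle)
      rcases this with ⟨h1, h2⟩ | ⟨h1, h2⟩
      · linarith
      · linarith
  intro x hx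
  have := key x hx
  simp only [hgdef] at this
  linarith

/-- Cruder sharpened Jensen bounds via bounds on `φ''/2`: if `m ≤ φ''(x)/2 ≤ M`
on `(a,b)` then `m · Var(X) ≤ E[φ(X)] - φ(μ) ≤ M · Var(X)`. -/
theorem stmt_3 {Ω : Type*} [MeasureSpace Ω] [IsProbabilityMeasure (volume : Measure Ω)]
    (a b : EReal) (hab : a < b) (X : Ω → ℝ) (φ : ℝ → ℝ) (μ m M : ℝ)
    (hX : ∀ᵐ ω, a < (X ω : EReal) ∧ (X ω : EReal) < b)
    (hXint : Integrable X) (hmean : ∫ ω, X ω = μ)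
    (hX2 : Integrable (fun ω => (X ω) ^ 2))
    (hφint : Integrable (fun ω => φ (X ω)))
    (hdiff : ∀ x : ℝ, a < (x : EReal) → (x : EReal) < b →
      DifferentiableAt ℝ φ x ∧ DifferentiableAt ℝ (deriv φ) x)
    (hm : ∀ x : ℝ, a < (x : EReal) → (x : EReal) < b → m ≤ deriv (deriv φ) x / 2)
    (hM : ∀ x : ℝ, a < (x : EReal) → (x : EReal) < b → deriv (deriv φ) x / 2 ≤ M) :
    m * (∫ ω, (X ω - μ) ^ 2) ≤ (∫ ω, φ (X ω)) - φ μ ∧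
      (∫ ω, φ (X ω)) - φ μ ≤ M * ∫ ω, (X ω - μ) ^ 2 := by
  set S : Set ℝ := {x : ℝ | a < (x : EReal) ∧ (x : EReal) < b} with hSdef
  have hSopen : IsOpen S := by
    have : S = (fun x : ℝ => (x : EReal)) ⁻¹' (Ioo a b) := by
      ext x; simp [hSdef, Ioo]
    rw [this]
    exact isOpen_Ioo.preimage continuous_coe_real_ereal
  have hSconv : Convex ℝ S := by
    rw [convex_iff_ordConnected]
    constructor
    intro x hx y hy z hz
    refine ⟨lt_of_lt_of_le hx.1 ?_, lt_of_le_of_lt ?_ hy.2⟩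
    · exact_mod_cast EReal.coe_le_coe_iff.mpr hz.1
    · exact_mod_cast EReal.coe_le_coe_iff.mpr hz.2
  have hXS : ∀ᵐ ω, X ω ∈ S := hX
  -- μ ∈ S
  have hμS : μ ∈ S := by
    constructor
    · -- a < μ
      induction a with
      | bot => exact bot_lt_iff_ne_bot.mpr (EReal.coe_ne_bot μ)
      | coe r =>
        have hae : ∀ᵐ ω, 0 < X ω - r := by
          filter_upwards [hX] with ω hω
          have : (r : EReal) < (X ω : EReal) := hω.1
          have : r < X ω := by exact_mod_cast this
          linarith
        have hint : Integrable (fun ω => X ω - r) := hXint.sub (integrable_const r)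
        have hnn : 0 ≤ᵐ[volume] fun ω => X ω - r := hae.mono fun ω h => h.le
        have hI : ∫ ω, (X ω - r) = μ - r := by
          rw [integral_sub hXint (integrable_const r), hmean, integral_const]
          simp
        by_contra hcon
        have hμr : μ ≤ r := by
          have : ¬ ((r : ℝ) : EReal) < (μ : EReal) := hcon
          exact_mod_cast not_lt.mp this
        have hz : ∫ ω, (X ω - r) = 0 := le_antisymm (by rw [hI]; linarith)
          (integral_nonneg_of_ae hnn)
        have := (integral_eq_zero_iff_of_nonneg_ae hnn hint).mp hz
        have hbad : ∀ᵐ ω : Ω, False := by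
          filter_upwards [hae, this] with ω h1 h2
          simp at h2; linarith
        obtain ⟨_, h⟩ := hbad.exists
        exact h.elim
      | top =>
        have hbad : ∀ᵐ ω : Ω, False := by
          filter_upwards [hX] with ω hω
          exact (not_top_lt hω.1).elim
        obtain ⟨_, h⟩ := hbad.exists
        exact h.elim
    · -- μ < b
      induction b with
      | bot =>
        have hbad : ∀ᵐ ω : Ω, False := by
          filter_upwards [hX] with ω hω
          exact (not_lt_bot hω.2).elim
        obtain ⟨_, h⟩ := hbad.exists
        exact h.elim
      | coe r =>
        have hae : ∀ᵐ ω, 0 < r - X ω := by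
          filter_upwards [hX] with ω hω
          have : (X ω : EReal) < (r : EReal) := hω.2
          have : X ω < r := by exact_mod_cast this
          linarith
        have hint : Integrable (fun ω => r - X ω) := (integrable_const r).sub hXint
        have hnn : 0 ≤ᵐ[volume] fun ω => r - X ω := hae.mono fun ω h => h.le
        have hI : ∫ ω, (r - X ω) = r - μ := by
          rw [integral_sub (integrable_const r) hXint, hmean, integral_const]
          simp
        by_contra hcon
        have hμr : r ≤ μ := by
          have : ¬ ((μ : ℝ) : EReal) < ((r : ℝ) : EReal) := hcon
          exact_mod_cast not_lt.mp this
        have hz : ∫ ω, (r - X ω) = 0 := le_antisymm (by rw [hI]; linarith)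
          (integral_nonneg_of_ae hnn)
        have := (integral_eq_zero_iff_of_nonneg_ae hnn hint).mp hz
        have hbad : ∀ᵐ ω : Ω, False := by
          filter_upwards [hae, this] with ω h1 h2
          simp at h2; linarith
        obtain ⟨_, h⟩ := hbad.exists
        exact h.elim
      | top => exact lt_top_iff_ne_top.mpr (EReal.coe_ne_top μ)
  have hdiff' : ∀ x ∈ S, DifferentiableAt ℝ φ x ∧ DifferentiableAt ℝ (deriv φ) x :=
    fun x hx => hdiff x hx.1 hx.2
  -- integrability of (X - μ)^2
  have hQint : Integrable (fun ω => (X ω - μ) ^ 2) := by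
    have : (fun ω => (X ω - μ) ^ 2)
        = fun ω => (X ω ^ 2 - (2 * μ) * X ω) + μ ^ 2 := by
      funext ω; ring
    rw [this]
    exact (hX2.sub (hXint.const_mul (2 * μ))).add (integrable_const _)
  have hZ : ∫ ω, (X ω - μ) = 0 := by
    rw [integral_sub hXint (integrable_const μ), hmean, integral_const]
    simp
  set c := deriv φ μ with hc
  have hXμint : Integrable (fun ω => X ω - μ) := hXint.sub (integrable_const μ)
  -- lower bound
  have hlow : m * (∫ ω, (X ω - μ) ^ 2) ≤ (∫ ω, φ (X ω)) - φ μ := by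
    have hkey := key_lemma S hSconv hSopen φ μ m hμS hdiff'
      (fun x hx => by have := hm x hx.1 hx.2; linarith)
    have hae : ∀ᵐ ω, m * (X ω - μ) ^ 2 + c * (X ω - μ) + φ μ ≤ φ (X ω) := by
      filter_upwards [hXS] with ω hω
      exact hkey (X ω) hω
    have h1 : Integrable (fun ω => m * (X ω - μ) ^ 2) := hQint.const_mul m
    have h2 : Integrable (fun ω => c * (X ω - μ)) := hXμint.const_mul c
    have hLint : Integrable (fun ω => m * (X ω - μ) ^ 2 + c * (X ω - μ) + φ μ) :=
      (h1.add h2).add (integrable_const _)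
    have hIL : ∫ ω, (m * (X ω - μ) ^ 2 + c * (X ω - μ) + φ μ)
        = m * (∫ ω, (X ω - μ) ^ 2) + φ μ := by
      have h12 : Integrable (fun ω => m * (X ω - μ) ^ 2 + c * (X ω - μ)) := h1.add h2
      rw [integral_add h12 (integrable_const _),
        integral_add h1 h2, integral_const_mul, integral_const_mul, integral_const, hZ]
      simp
    have := integral_mono_ae hLint hφint hae
    rw [hIL] at this
    linarith
  -- upper bound : apply key_lemma to -φ with m = -M
  have hup : (∫ ω, φ (X ω)) - φ μ ≤ M * ∫ ω, (X ω - μ) ^ 2 := by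
    have hnegderiv : deriv (fun y => -φ y) = fun y => -deriv φ y := by
      funext y; exact deriv.neg
    have hdiffneg : ∀ x ∈ S, DifferentiableAt ℝ (fun y => -φ y) x ∧
        DifferentiableAt ℝ (deriv (fun y => -φ y)) x := by
      intro x hx
      refine ⟨(hdiff' x hx).1.neg, ?_⟩
      rw [hnegderiv]
      exact (hdiff' x hx).2.neg
    have hmneg : ∀ x ∈ S, 2 * (-M) ≤ deriv (deriv (fun y => -φ y)) x := by
      intro x hx
      rw [hnegderiv]
      have : deriv (fun y => -deriv φ y) x = -deriv (deriv φ) x := deriv.neg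
      rw [this]
      have := hM x hx.1 hx.2
      linarith
    have hkey := key_lemma S hSconv hSopen (fun y => -φ y) μ (-M) hμS hdiffneg hmneg
    have hdμ : deriv (fun y => -φ y) μ = -c := by
      rw [hnegderiv]
    have hae : ∀ᵐ ω, φ (X ω) ≤ M * (X ω - μ) ^ 2 + c * (X ω - μ) + φ μ := by
      filter_upwards [hXS] with ω hω
      have h := hkey (X ω) hω
      rw [hdμ] at h
      simp only [neg_mul] at h
      nlinarith [h]
    have h1 : Integrable (fun ω => M * (X ω - μ) ^ 2) := hQint.const_mul M
    have h2 : Integrable (fun ω => c * (X ω - μ)) := hXμint.const_mul c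
    have hUint : Integrable (fun ω => M * (X ω - μ) ^ 2 + c * (X ω - μ) + φ μ) :=
      (h1.add h2).add (integrable_const _)
    have hIU : ∫ ω, (M * (X ω - μ) ^ 2 + c * (X ω - μ) + φ μ)
        = M * (∫ ω, (X ω - μ) ^ 2) + φ μ := by
      have h12 : Integrable (fun ω => M * (X ω - μ) ^ 2 + c * (X ω - μ)) := h1.add h2
      rw [integral_add h12 (integrable_const _),
        integral_add h1 h2, integral_const_mul, integral_const_mul, integral_const, hZ]
      simp
    have := integral_mono_ae hφint hUint hae
    rw [hIU] at this
    linarith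
  exact ⟨hlow, hup⟩
end

section
/- Let x₁,…,xₙ be real numbers in [a,b] where a is their minimum and b their maximum, let x̄ be their arithmetic mean, S² = (1/n)∑(xᵢ - x̄)² their empirical variance, and φ twice differentiable on an open interval containing [a,b]. Define h(x) = (φ(x)-φ(x̄))/(x-x̄)² - φ'(x̄)/(x-x̄). Then (inf_{x∈[a,b], x≠x̄} h(x)) · S² ≤ (1/n)∑φ(xᵢ) - φ(x̄) ≤ (sup_{x∈[a,b], x≠x̄} h(x)) · S². -/
open Set Finset

/-- Empirical (finite-sample) version of the sharpened Jensen inequality. -/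
theorem stmt_4 (n : ℕ) (hn : 0 < n) (x : Fin n → ℝ) (a b : ℝ)
    (ha : IsLeast (Set.range x) a) (hb : IsGreatest (Set.range x) b)
    (φ : ℝ → ℝ) (U : Set ℝ) (hU : IsOpen U) (hUab : Icc a b ⊆ U)
    (hdiff : ∀ y ∈ U, DifferentiableAt ℝ φ y ∧ DifferentiableAt ℝ (deriv φ) y)
    (xbar S2 : ℝ)
    (hxbar : xbar = (∑ i, x i) / n)
    (hS2 : S2 = (∑ i, (x i - xbar) ^ 2) / n)
    (m M : ℝ)
    (hm : ∀ y ∈ Icc a b, y ≠ xbar →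
      m ≤ (φ y - φ xbar) / (y - xbar) ^ 2 - deriv φ xbar / (y - xbar))
    (hM : ∀ y ∈ Icc a b, y ≠ xbar →
      (φ y - φ xbar) / (y - xbar) ^ 2 - deriv φ xbar / (y - xbar) ≤ M) :
    m * S2 ≤ (∑ i, φ (x i)) / n - φ xbar ∧
      (∑ i, φ (x i)) / n - φ xbar ≤ M * S2 := by
  have hn' : (0:ℝ) < n := Nat.cast_pos.mpr hn
  have hmem : ∀ i, x i ∈ Icc a b := fun i => ⟨ha.2 ⟨i, rfl⟩, hb.2 ⟨i, rfl⟩⟩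
  have key : ∀ i, m * (x i - xbar)^2 ≤ φ (x i) - φ xbar - deriv φ xbar * (x i - xbar)
      ∧ φ (x i) - φ xbar - deriv φ xbar * (x i - xbar) ≤ M * (x i - xbar)^2 := by
    intro i
    by_cases h : x i = xbar
    · simp [h]
    · have hd : x i - xbar ≠ 0 := sub_ne_zero.mpr h
      have hd2 : (0:ℝ) < (x i - xbar)^2 := by positivity
      have e : (φ (x i) - φ xbar) / (x i - xbar)^2 - deriv φ xbar / (x i - xbar)
          = (φ (x i) - φ xbar - deriv φ xbar * (x i - xbar)) / (x i - xbar)^2 := by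
        field_simp
      have h1 := hm (x i) (hmem i) h
      have h2 := hM (x i) (hmem i) h
      rw [e, le_div_iff₀ hd2] at h1
      rw [e, div_le_iff₀ hd2] at h2
      exact ⟨h1, h2⟩
  have sum0 : ∑ i, (x i - xbar) = 0 := by
    rw [Finset.sum_sub_distrib, Finset.sum_const, Finset.card_univ, Fintype.card_fin,
      nsmul_eq_mul, hxbar]
    field_simp
    ring
  have hsum : ∑ i, (φ (x i) - φ xbar - deriv φ xbar * (x i - xbar))
      = ∑ i, φ (x i) - n * φ xbar - deriv φ xbar * ∑ i, (x i - xbar) := by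
    rw [Finset.sum_sub_distrib, Finset.sum_sub_distrib, ← Finset.mul_sum, Finset.sum_const,
      Finset.card_univ, Fintype.card_fin, nsmul_eq_mul]
  have hlow : m * (∑ i, (x i - xbar)^2) ≤ ∑ i, φ (x i) - n * φ xbar := by
    have := Finset.sum_le_sum (s := Finset.univ) (fun i _ => (key i).1)
    rw [hsum, sum0] at this
    simpa [Finset.mul_sum] using this
  have hhigh : ∑ i, φ (x i) - n * φ xbar ≤ M * (∑ i, (x i - xbar)^2) := by
    have := Finset.sum_le_sum (s := Finset.univ) (fun i _ => (key i).2)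
    rw [hsum, sum0] at this
    simpa [Finset.mul_sum] using this
  have e2 : (∑ i, φ (x i)) / n - φ xbar = (∑ i, φ (x i) - n * φ xbar) / n := by
    field_simp
  rw [hS2, e2]
  constructor
  · rw [← mul_div_assoc]
    exact (div_le_div_iff_of_pos_right hn').mpr hlow
  · rw [← mul_div_assoc]
    exact (div_le_div_iff_of_pos_right hn').mpr hhigh
end

section
/- Let φ be twice differentiable on (a,b) with φ' convex on (a,b), and fix μ ∈ (a,b). Then the function h(x) = (φ(x)-φ(μ))/(x-μ)² - φ'(μ)/(x-μ), defined for x ∈ (a,b), x ≠ μ, is monotonically increasing on (a,μ) and on (μ,b) (and as a function on (a,b)\{μ}). -/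
open Set intervalIntegral

private lemma seg_mem {a b μ x t : ℝ} (hμ : μ ∈ Ioo a b) (hx : x ∈ Ioo a b)
    (ht : t ∈ Icc (0:ℝ) 1) : μ + t * (x - μ) ∈ Ioo a b := by
  simpa using (convex_Ioo a b).add_smul_sub_mem hμ hx ht

private lemma integrable_aux {a b μ x : ℝ} (hμ : μ ∈ Ioo a b) (hx : x ∈ Ioo a b) {ψ : ℝ → ℝ}
    (hmono : MonotoneOn ψ (Ioo a b)) :
    IntervalIntegrable (fun t => (1 - t) * ψ (μ + t * (x - μ))) MeasureTheory.volume 0 1 := by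
  have hI : uIcc (0:ℝ) 1 = Icc 0 1 := uIcc_of_le zero_le_one
  have hint : IntervalIntegrable (fun t => ψ (μ + t * (x - μ))) MeasureTheory.volume 0 1 := by
    rcases le_total μ x with h | h
    · apply MonotoneOn.intervalIntegrable
      rw [hI]
      intro t ht s hs hts
      exact hmono (seg_mem hμ hx ht) (seg_mem hμ hx hs)
        (by nlinarith [mul_le_mul_of_nonneg_right hts (sub_nonneg.2 h)])
    · apply AntitoneOn.intervalIntegrable
      rw [hI]
      intro t ht s hs hts
      exact hmono (seg_mem hμ hx hs) (seg_mem hμ hx ht)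
        (by nlinarith [mul_le_mul_of_nonneg_right hts (sub_nonneg.2 (sub_nonneg.2 h))])
  exact hint.continuousOn_mul (by fun_prop)

private lemma key_identity {a b μ x : ℝ} (hμ : μ ∈ Ioo a b) (hx : x ∈ Ioo a b) {φ : ℝ → ℝ}
    (hdiff : ∀ y ∈ Ioo a b, DifferentiableAt ℝ φ y ∧ DifferentiableAt ℝ (deriv φ) y)
    (hmono : MonotoneOn (deriv (deriv φ)) (Ioo a b)) :
    φ x - φ μ - (x - μ) * deriv φ μ
      = (x - μ) ^ 2 * ∫ t in (0:ℝ)..1, (1 - t) * deriv (deriv φ) (μ + t * (x - μ)) := by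
  set g : ℝ → ℝ := fun t => μ + t * (x - μ) with hg
  set F : ℝ → ℝ := fun t => φ (g t) + (1 - t) * ((x - μ) * deriv φ (g t)) with hF
  have hder : ∀ t ∈ uIcc (0:ℝ) 1,
      HasDerivAt F ((x - μ) ^ 2 * ((1 - t) * deriv (deriv φ) (g t))) t := by
    intro t ht
    rw [uIcc_of_le zero_le_one] at ht
    have hgm : g t ∈ Ioo a b := seg_mem hμ hx ht
    have hgd : HasDerivAt g (x - μ) t := by
      have := ((hasDerivAt_id t).mul_const (x - μ)).const_add μ
      rw [one_mul] at this
      exact this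
    have h1 : HasDerivAt (fun t => φ (g t)) ((x - μ) * deriv φ (g t)) t := by
      have := (hdiff _ hgm).1.hasDerivAt.comp t hgd
      rw [mul_comm]
      exact this
    have h2 : HasDerivAt (fun t => deriv φ (g t)) (deriv (deriv φ) (g t) * (x - μ)) t :=
      (hdiff _ hgm).2.hasDerivAt.comp t hgd
    have h3 : HasDerivAt (fun t => (1 - t) * ((x - μ) * deriv φ (g t)))
        ((-1) * ((x - μ) * deriv φ (g t))
          + (1 - t) * ((x - μ) * (deriv (deriv φ) (g t) * (x - μ)))) t :=
      (((hasDerivAt_id t).const_sub 1)).mul (h2.const_mul (x - μ))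
    have := h1.add h3
    exact this.congr_deriv (by ring)
  have hint : IntervalIntegrable (fun t => (x - μ) ^ 2 * ((1 - t) * deriv (deriv φ) (g t)))
      MeasureTheory.volume 0 1 := (integrable_aux hμ hx hmono).const_mul _
  have := integral_eq_sub_of_hasDerivAt hder hint
  rw [integral_const_mul] at this
  simp only [hF, hg] at this
  rw [this]
  have e1 : μ + 1 * (x - μ) = x := by ring
  have e0 : μ + 0 * (x - μ) = μ := by ring
  rw [e1, e0]
  ring

/-- If `φ'` is convex on `(a,b)` then `h(x) = (φ(x)-φ(μ))/(x-μ)² - φ'(μ)/(x-μ)`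
is monotonically increasing on `(a,b) \ {μ}`. -/
theorem stmt_5 (a b μ : ℝ) (hμ : μ ∈ Ioo a b) (φ : ℝ → ℝ)
    (hdiff : ∀ y ∈ Ioo a b, DifferentiableAt ℝ φ y ∧ DifferentiableAt ℝ (deriv φ) y)
    (hconv : ConvexOn ℝ (Ioo a b) (deriv φ)) :
    MonotoneOn (fun x => (φ x - φ μ) / (x - μ) ^ 2 - deriv φ μ / (x - μ))
      (Ioo a b \ {μ}) := by
  have hmono : MonotoneOn (deriv (deriv φ)) (Ioo a b) :=
    hconv.monotoneOn_deriv (fun x hx => (hdiff x hx).2)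
  have hrep : ∀ x ∈ Ioo a b \ {μ},
      (φ x - φ μ) / (x - μ) ^ 2 - deriv φ μ / (x - μ)
        = ∫ t in (0:ℝ)..1, (1 - t) * deriv (deriv φ) (μ + t * (x - μ)) := by
    intro x ⟨hx, hxμ⟩
    have hne : x - μ ≠ 0 := sub_ne_zero.2 hxμ
    have h2 : (x - μ) ^ 2 ≠ 0 := pow_ne_zero _ hne
    calc (φ x - φ μ) / (x - μ) ^ 2 - deriv φ μ / (x - μ)
        = (φ x - φ μ - (x - μ) * deriv φ μ) / (x - μ) ^ 2 := by field_simp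
      _ = ((x - μ) ^ 2 * ∫ t in (0:ℝ)..1,
            (1 - t) * deriv (deriv φ) (μ + t * (x - μ))) / (x - μ) ^ 2 := by
          rw [key_identity hμ hx hdiff hmono]
      _ = _ := mul_div_cancel_left₀ _ h2
  intro x hx y hy hxy
  dsimp only
  rw [hrep x hx, hrep y hy]
  apply integral_mono_on zero_le_one (integrable_aux hμ hx.1 hmono)
    (integrable_aux hμ hy.1 hmono)
  intro t ht
  have h1t : 0 ≤ 1 - t := by linarith [ht.2]
  apply mul_le_mul_of_nonneg_left _ h1t
  exact hmono (seg_mem hμ hx.1 ht) (seg_mem hμ hy.1 ht)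
    (by nlinarith [mul_le_mul_of_nonneg_left hxy ht.1])
end

section
/- Let φ be twice differentiable on (a,b) with φ' concave on (a,b), and fix μ ∈ (a,b). Then h(x) = (φ(x)-φ(μ))/(x-μ)² - φ'(μ)/(x-μ) is monotonically decreasing in x on (a,b)\{μ}. -/
open Set

/-- If `φ'` is concave on `(a,b)` then `h(x) = (φ(x)-φ(μ))/(x-μ)² - φ'(μ)/(x-μ)`
is monotonically decreasing on `(a,b) \ {μ}`. -/
theorem stmt_6 (a b μ : ℝ) (hμ : μ ∈ Ioo a b) (φ : ℝ → ℝ)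
    (hdiff : ∀ y ∈ Ioo a b, DifferentiableAt ℝ φ y ∧ DifferentiableAt ℝ (deriv φ) y)
    (hconv : ConcaveOn ℝ (Ioo a b) (deriv φ)) :
    AntitoneOn (fun x => (φ x - φ μ) / (x - μ) ^ 2 - deriv φ μ / (x - μ))
      (Ioo a b \ {μ}) := by
  set g := deriv φ with hgdef
  set g' := deriv (deriv φ) with hg'def
  set h : ℝ → ℝ := fun x => (φ x - φ μ) / (x - μ) ^ 2 - g μ / (x - μ) with hhdef
  -- tangent inequality at a moving point x
  have hA : ∀ x ∈ Ioo a b, g' x * (x - μ) ≤ g x - g μ := by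
    intro x hx
    rcases lt_trichotomy x μ with hlt | rfl | hlt
    · have := hconv.slope_le_deriv hx hμ hlt (hdiff x hx).2
      rw [slope_def_field, div_le_iff₀ (by linarith)] at this
      nlinarith
    · simp
    · have := hconv.deriv_le_slope hμ hx hlt (hdiff x hx).2
      rw [slope_def_field, le_div_iff₀ (by linarith)] at this
      nlinarith
  -- tangent inequality at μ
  have hB : ∀ x ∈ Ioo a b, g x - g μ ≤ g' μ * (x - μ) := by
    intro x hx
    rcases lt_trichotomy x μ with hlt | rfl | hlt
    · have := hconv.deriv_le_slope hx hμ hlt (hdiff μ hμ).2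
      rw [slope_def_field, le_div_iff₀ (by linarith)] at this
      nlinarith
    · simp
    · have := hconv.slope_le_deriv hμ hx hlt (hdiff μ hμ).2
      rw [slope_def_field, div_le_iff₀ (by linarith)] at this
      nlinarith
  set F : ℝ → ℝ := fun x => φ x - φ μ - (g x + g μ) * (x - μ) / 2 with hFdef
  set G : ℝ → ℝ := fun x => φ x - φ μ - g μ * (x - μ) - g' μ * (x - μ) ^ 2 / 2 with hGdef
  have hFd : ∀ x ∈ Ioo a b, HasDerivAt F ((g x - g μ - g' x * (x - μ)) / 2) x := by
    intro x hx
    have h1 : HasDerivAt φ (g x) x := (hdiff x hx).1.hasDerivAt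
    have h2 : HasDerivAt g (g' x) x := (hdiff x hx).2.hasDerivAt
    have h3 : HasDerivAt (fun y : ℝ => y - μ) 1 x := (hasDerivAt_id x).sub_const μ
    have := ((h1.sub_const (φ μ)).fun_sub (((h2.add_const (g μ)).fun_mul h3).div_const 2))
    refine this.congr_deriv ?_
    ring
  have hGd : ∀ x ∈ Ioo a b, HasDerivAt G (g x - g μ - g' μ * (x - μ)) x := by
    intro x hx
    have h1 : HasDerivAt φ (g x) x := (hdiff x hx).1.hasDerivAt
    have h3 : HasDerivAt (fun y : ℝ => y - μ) 1 x := (hasDerivAt_id x).sub_const μ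
    have h4 : HasDerivAt (fun y : ℝ => (y - μ) ^ 2) (2 * (x - μ)) x := by
      simpa using h3.fun_pow 2
    have := ((h1.sub_const (φ μ)).fun_sub ((h3.const_mul (g μ)))).fun_sub
      ((h4.const_mul (g' μ)).div_const 2)
    refine this.congr_deriv ?_
    ring
  -- F is monotone on (a,b)
  have hFmono : MonotoneOn F (Ioo a b) := by
    apply monotoneOn_of_deriv_nonneg (convex_Ioo a b)
    · intro x hx
      exact ((hFd x hx).differentiableAt.continuousAt).continuousWithinAt
    · intro x hx
      rw [interior_Ioo] at hx
      exact (hFd x hx).differentiableAt.differentiableWithinAt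
    · intro x hx
      rw [interior_Ioo] at hx
      rw [(hFd x hx).deriv]
      have := hA x hx
      linarith
  -- G is antitone on (a,b)
  have hGanti : AntitoneOn G (Ioo a b) := by
    apply antitoneOn_of_deriv_nonpos (convex_Ioo a b)
    · intro x hx
      exact ((hGd x hx).differentiableAt.continuousAt).continuousWithinAt
    · intro x hx
      rw [interior_Ioo] at hx
      exact (hGd x hx).differentiableAt.differentiableWithinAt
    · intro x hx
      rw [interior_Ioo] at hx
      rw [(hGd x hx).deriv]
      have := hB x hx
      linarith
  have hFμ : F μ = 0 := by simp [hFdef]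
  have hGμ : G μ = 0 := by simp [hGdef]
  -- derivative of h
  have hhd : ∀ x ∈ Ioo a b, x ≠ μ → HasDerivAt h (-2 * F x / (x - μ) ^ 3) x := by
    intro x hx hne
    have hsub : x - μ ≠ 0 := sub_ne_zero.mpr hne
    have h1 : HasDerivAt φ (g x) x := (hdiff x hx).1.hasDerivAt
    have h3 : HasDerivAt (fun y : ℝ => y - μ) 1 x := (hasDerivAt_id x).sub_const μ
    have h4 : HasDerivAt (fun y : ℝ => (y - μ) ^ 2) (2 * (x - μ)) x := by
      simpa using h3.fun_pow 2
    have h5 := (h1.sub_const (φ μ)).fun_div h4 (pow_ne_zero 2 hsub)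
    have h6 := (hasDerivAt_const x (g μ)).fun_div h3 hsub
    have := h5.fun_sub h6
    refine this.congr_deriv ?_
    field_simp
    ring
  -- h ≥ g' μ / 2 left of μ, h ≤ g' μ / 2 right of μ
  have hrepr : ∀ x, x ≠ μ → h x = G x / (x - μ) ^ 2 + g' μ / 2 := by
    intro x hne
    have hsub : x - μ ≠ 0 := sub_ne_zero.mpr hne
    simp only [hhdef, hGdef]
    field_simp
    ring
  -- antitone on each side of μ
  have hside : ∀ s : Set ℝ, Convex ℝ s → s ⊆ Ioo a b → (∀ x ∈ s, x ≠ μ) →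
      (∀ x ∈ s, -2 * F x / (x - μ) ^ 3 ≤ 0) → AntitoneOn h s := by
    intro s hs hsub hne hsign
    apply antitoneOn_of_deriv_nonpos hs
    · intro x hx
      exact ((hhd x (hsub hx) (hne x hx)).differentiableAt.continuousAt).continuousWithinAt
    · intro x hx
      have hx' := interior_subset hx
      exact (hhd x (hsub hx') (hne x hx')).differentiableAt.differentiableWithinAt
    · intro x hx
      have hx' := interior_subset hx
      rw [(hhd x (hsub hx') (hne x hx')).deriv]
      exact hsign x hx'
  have hleft : AntitoneOn h (Ioo a μ) := by
    apply hside _ (convex_Ioo a μ) (fun x hx => ⟨hx.1, hx.2.trans hμ.2⟩)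
      (fun x hx => ne_of_lt hx.2)
    intro x hx
    have hxab : x ∈ Ioo a b := ⟨hx.1, hx.2.trans hμ.2⟩
    have hF : F x ≤ 0 := by
      have := hFmono hxab hμ (le_of_lt hx.2)
      rw [hFμ] at this; exact this
    have hden : (x - μ) ^ 3 < 0 :=
      Odd.pow_neg ⟨1, by norm_num⟩ (by linarith [hx.2])
    exact div_nonpos_of_nonneg_of_nonpos (by linarith) (le_of_lt hden)
  have hright : AntitoneOn h (Ioo μ b) := by
    apply hside _ (convex_Ioo μ b) (fun x hx => ⟨hμ.1.trans hx.1, hx.2⟩)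
      (fun x hx => (ne_of_lt hx.1).symm)
    intro x hx
    have hxab : x ∈ Ioo a b := ⟨hμ.1.trans hx.1, hx.2⟩
    have hF : 0 ≤ F x := by
      have := hFmono hμ hxab (le_of_lt hx.1)
      rw [hFμ] at this; exact this
    have hden : 0 < (x - μ) ^ 3 := pow_pos (by linarith [hx.1]) 3
    exact div_nonpos_of_nonpos_of_nonneg (by linarith) (le_of_lt hden)
  -- main proof
  intro x hx y hy hxy
  obtain ⟨hxab, hxne⟩ := hx
  obtain ⟨hyab, hyne⟩ := hy
  simp only [mem_singleton_iff] at hxne hyne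
  show h y ≤ h x
  rcases lt_or_gt_of_ne hxne with hxμ | hxμ
  · rcases lt_or_gt_of_ne hyne with hyμ | hyμ
    · exact hleft ⟨hxab.1, hxμ⟩ ⟨hyab.1, hyμ⟩ hxy
    · -- x < μ < y : h y ≤ g' μ / 2 ≤ h x
      have hxr := hrepr x (ne_of_lt hxμ)
      have hyr := hrepr y (ne_of_gt hyμ)
      have hGx : 0 ≤ G x := by
        have := hGanti hxab hμ (le_of_lt hxμ)
        rw [hGμ] at this; exact this
      have hGy : G y ≤ 0 := by
        have := hGanti hμ hyab (le_of_lt hyμ)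
        rw [hGμ] at this; exact this
      have hx2 : (0:ℝ) < (x - μ) ^ 2 := by nlinarith
      have hy2 : (0:ℝ) < (y - μ) ^ 2 := by nlinarith
      have hq1 : 0 ≤ G x / (x - μ) ^ 2 := div_nonneg hGx hx2.le
      have hq2 : G y / (y - μ) ^ 2 ≤ 0 := div_nonpos_of_nonpos_of_nonneg hGy hy2.le
      rw [hxr, hyr]
      linarith
  · -- μ < x ≤ y
    have hyμ : μ < y := lt_of_lt_of_le hxμ hxy
    exact hright ⟨hxμ, hxab.2⟩ ⟨hyμ, hyab.2⟩ hxy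
end

section
/- Let X be an exponential random variable with rate 1 (mean 1). Then E[e^{X/2}] - e^{1/2} ≥ (1 - e^{1/2} + (1/2)e^{1/2}), i.e., the Jensen gap for φ(x) = e^{x/2} is at least h(0;1)·Var(X) where h(0;1) = 1 - e^{1/2} + (1/2)e^{1/2} ≈ 0.176 and Var(X) = 1. -/
open MeasureTheory ProbabilityTheory Real
open scoped ENNReal NNReal

open Set in
lemma exp_integral_val : (∫ x, Real.exp (x / 2) ∂(expMeasure 1)) = 2 := by
  have hmeas : Measurable fun x : ℝ => (exponentialPDFReal 1 x).toNNReal :=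
    (measurable_exponentialPDFReal 1).real_toNNReal
  have hd : expMeasure 1
      = volume.withDensity (fun x => ((exponentialPDFReal 1 x).toNNReal : ℝ≥0∞)) := by
    rfl
  rw [hd, integral_withDensity_eq_integral_smul hmeas]
  have h1 : ∀ x : ℝ, (exponentialPDFReal 1 x).toNNReal • Real.exp (x / 2)
      = (if 0 ≤ x then Real.exp (-x) * Real.exp (x / 2) else 0) := by
    intro x
    rw [NNReal.smul_def, smul_eq_mul, Real.coe_toNNReal _ (exponentialPDFReal_nonneg one_pos x)]
    unfold exponentialPDFReal gammaPDFReal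
    split_ifs with h
    · simp [Real.Gamma_one]
    · simp
  simp_rw [h1]
  have h2 : (∫ x : ℝ, if 0 ≤ x then Real.exp (-x) * Real.exp (x / 2) else 0)
      = ∫ x in Ioi (0:ℝ), Real.exp (-x) * Real.exp (x / 2) := by
    have he : (fun x : ℝ => if 0 ≤ x then Real.exp (-x) * Real.exp (x / 2) else 0)
        = (Ici (0:ℝ)).indicator (fun x => Real.exp (-x) * Real.exp (x / 2)) := by
      ext x; simp [indicator, mem_Ici]
    rw [he, integral_indicator measurableSet_Ici,
      MeasureTheory.integral_Ici_eq_integral_Ioi]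
  rw [h2]
  have h3 : ∀ x ∈ Ioi (0:ℝ), Real.exp (-x) * Real.exp (x / 2)
      = Real.exp (-(1/2) * x ^ (1:ℝ)) := by
    intro x hx
    rw [← Real.exp_add, Real.rpow_one]
    ring_nf
  rw [setIntegral_congr_fun measurableSet_Ioi h3,
    integral_exp_neg_mul_rpow one_pos (by norm_num : (0:ℝ) < 1/2)]
  norm_num [Real.Gamma_two]

/-- For `X ~ Exp(1)`, the Jensen gap `E[e^{X/2}] - e^{1/2}` is at least
`h(0;1)·Var(X) = 1 - e^{1/2} + (1/2)e^{1/2}`. -/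
theorem stmt_8 :
    (∫ x, Real.exp (x / 2) ∂(expMeasure 1)) - Real.exp (1 / 2) ≥
      1 - Real.exp (1 / 2) + (1 / 2) * Real.exp (1 / 2) := by
  rw [exp_integral_val]
  have h : Real.exp (1/2) ≤ 2 := by
    nlinarith [Real.exp_one_lt_d9, Real.exp_pos (1/2 : ℝ),
      Real.exp_add (1/2 : ℝ) (1/2), Real.exp_pos 1]
  linarith
end

section
/- Let X be a nonnegative random variable with mean μ > 0, finite variance, and t > 0 such that E[e^{tX}] < ∞. Then E[e^{tX}] - e^{tμ} ≥ ((1 - e^{tμ} + tμe^{tμ})/μ²) · Var(X), and the constant (1 - e^{tμ} + tμe^{tμ})/μ² is strictly positive. -/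
open MeasureTheory Real

private lemma quad_bound (s : ℝ) (hs : 0 ≤ s) : Real.exp (-s) ≤ 1 - s + s ^ 2 / 2 := by
  have hd : ∀ y : ℝ, HasDerivAt (fun z : ℝ => 1 - z + z ^ 2 / 2 - Real.exp (-z))
      (-1 + y + Real.exp (-y)) y := by
    intro y
    have h1 : HasDerivAt (fun z : ℝ => Real.exp (-z)) (Real.exp (-y) * (-1)) y :=
      ((hasDerivAt_id y).neg).exp
    have h2 : HasDerivAt (fun z : ℝ => 1 - z + z ^ 2 / 2)
        (-1 + y) y := by
      have := ((hasDerivAt_id y).const_sub 1).add (((hasDerivAt_id y).pow 2).div_const 2)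
      refine this.congr_deriv ?_
      simp
    refine (h2.sub h1).congr_deriv ?_
    ring
  have hmono : MonotoneOn (fun z : ℝ => 1 - z + z ^ 2 / 2 - Real.exp (-z)) (Set.Ici 0) := by
    apply monotoneOn_of_deriv_nonneg (convex_Ici 0)
    · exact (Continuous.continuousOn (by continuity))
    · intro y _
      exact (hd y).differentiableAt.differentiableWithinAt
    · intro y hy
      rw [(hd y).deriv]
      have := Real.add_one_le_exp (-y)
      linarith
  have h0 : (fun z : ℝ => 1 - z + z ^ 2 / 2 - Real.exp (-z)) 0 ≤
      (fun z : ℝ => 1 - z + z ^ 2 / 2 - Real.exp (-z)) s :=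
    hmono (Set.self_mem_Ici) hs hs
  simp only [Real.exp_zero] at h0
  norm_num at h0
  linarith

private lemma const_pos (s : ℝ) (hs : 0 < s) : 0 < 1 - Real.exp s + s * Real.exp s := by
  have h1 : -s + 1 < Real.exp (-s) := Real.add_one_lt_exp (by linarith : -s ≠ 0)
  have h2 : Real.exp (-s) * Real.exp s = 1 := by
    rw [← Real.exp_add]; simp
  nlinarith [Real.exp_pos s]

private lemma key_ineq (μ t : ℝ) (hμ : 0 < μ) (ht : 0 < t) (x : ℝ) (hx : 0 ≤ x) :
    (1 - Real.exp (t * μ) + t * μ * Real.exp (t * μ)) / μ ^ 2 * (x - μ) ^ 2 ≤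
      Real.exp (t * x) - Real.exp (t * μ) - t * Real.exp (t * μ) * (x - μ) := by
  set a := Real.exp (t * μ) with ha
  set c := (1 - a + t * μ * a) / μ ^ 2 with hc
  have hcμ : c * μ ^ 2 = 1 - a + t * μ * a := by
    rw [hc]; field_simp
  set g : ℝ → ℝ := fun y => Real.exp (t * y) - a - t * a * (y - μ) - c * (y - μ) ^ 2 with hgdef
  set g1 : ℝ → ℝ := fun y => t * Real.exp (t * y) - t * a - 2 * c * (y - μ) with hg1def
  set g2 : ℝ → ℝ := fun y => t ^ 2 * Real.exp (t * y) - 2 * c with hg2def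
  have hexp : ∀ y : ℝ, HasDerivAt (fun z : ℝ => Real.exp (t * z)) (t * Real.exp (t * y)) y := by
    intro y
    have := ((hasDerivAt_id y).const_mul t).exp
    refine this.congr_deriv ?_
    simp [mul_comm]
  have hg : ∀ y : ℝ, HasDerivAt g (g1 y) y := by
    intro y
    have h1 := (((hexp y).sub_const a).sub
      (((hasDerivAt_id y).sub_const μ).const_mul (t * a))).sub
      ((((hasDerivAt_id y).sub_const μ).pow 2).const_mul c)
    refine h1.congr_deriv ?_
    simp [hg1def]
    ring
  have hg1 : ∀ y : ℝ, HasDerivAt g1 (g2 y) y := by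
    intro y
    have h1 := (((hexp y).const_mul t).sub_const (t * a)).sub
      (((hasDerivAt_id y).sub_const μ).const_mul (2 * c))
    refine h1.congr_deriv ?_
    simp only [hg2def]
    ring
  have hg2 : ∀ y : ℝ, HasDerivAt g2 (t ^ 3 * Real.exp (t * y)) y := by
    intro y
    have h1 := ((hexp y).const_mul (t ^ 2)).sub_const (2 * c)
    refine h1.congr_deriv ?_
    ring
  have hderivg : deriv g = g1 := funext fun y => (hg y).deriv
  have hderivg1 : deriv g1 = g2 := funext fun y => (hg1 y).deriv
  have hgdiff : Differentiable ℝ g := fun y => (hg y).differentiableAt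
  have hg1diff : Differentiable ℝ g1 := fun y => (hg1 y).differentiableAt
  have hg2diff : Differentiable ℝ g2 := fun y => (hg2 y).differentiableAt
  have hgμ : g μ = 0 := by simp [hgdef, ha]
  have hg1μ : g1 μ = 0 := by simp [hg1def, ha]
  have hg0 : g 0 = 0 := by
    simp only [hgdef, mul_zero, Real.exp_zero]
    nlinarith [hcμ]
  -- convexity of g1
  have hconv : ConvexOn ℝ Set.univ g1 := by
    apply convexOn_of_deriv2_nonneg convex_univ hg1diff.continuous.continuousOn
      hg1diff.differentiableOn
    · rw [hderivg1]; exact hg2diff.differentiableOn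
    · intro y _
      have : deriv^[2] g1 y = deriv (deriv g1) y := rfl
      rw [this, hderivg1, (hg2 y).deriv]
      positivity
  -- 2c ≤ t² a
  have hc2 : 2 * c ≤ t ^ 2 * a := by
    have hq := quad_bound (t * μ) (by positivity)
    have h2 : Real.exp (-(t * μ)) * a = 1 := by rw [ha, ← Real.exp_add]; simp
    have hμ2 : (0:ℝ) < μ ^ 2 := by positivity
    have key : 2 * c * μ ^ 2 ≤ t ^ 2 * a * μ ^ 2 := by
      nlinarith [Real.exp_pos (t * μ), Real.exp_pos (-(t * μ))]
    exact le_of_mul_le_mul_right key hμ2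
  -- reduce to 0 ≤ g x
  have hgoal : 0 ≤ g x → c * (x - μ) ^ 2 ≤ Real.exp (t * x) - a - t * a * (x - μ) := by
    intro h; simp only [hgdef] at h; linarith
  apply hgoal
  rcases le_or_gt μ x with hxμ | hxμ
  · -- x ≥ μ : g1 ≥ 0 on [μ, ∞), g monotone
    have hmono1 : MonotoneOn g1 (Set.Ici μ) := by
      apply monotoneOn_of_deriv_nonneg (convex_Ici μ) hg1diff.continuous.continuousOn
        hg1diff.differentiableOn
      intro y hy
      rw [hderivg1]
      simp only [interior_Ici, Set.mem_Ioi] at hy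
      have : a ≤ Real.exp (t * y) := by
        rw [ha]; exact Real.exp_le_exp.2 (by nlinarith)
      simp only [hg2def]
      nlinarith
    have hg1nn : ∀ y ∈ Set.Ici μ, 0 ≤ g1 y := by
      intro y hy
      have := hmono1 Set.self_mem_Ici hy hy
      rw [hg1μ] at this; exact this
    have hmono : MonotoneOn g (Set.Ici μ) := by
      apply monotoneOn_of_deriv_nonneg (convex_Ici μ) hgdiff.continuous.continuousOn
        hgdiff.differentiableOn
      intro y hy
      rw [hderivg]
      exact hg1nn y (le_of_lt (by simpa [interior_Ici] using hy))
    have := hmono Set.self_mem_Ici hxμ hxμ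
    rw [hgμ] at this; exact this
  · rcases le_or_gt (g1 x) 0 with h1x | h1x
    · -- g1 ≤ 0 on [x, μ], g antitone there
      have hseg : ∀ y ∈ Set.Icc x μ, g1 y ≤ 0 := by
        intro y hy
        have hmem : y ∈ segment ℝ x μ := by
          rw [segment_eq_Icc hxμ.le]; exact hy
        have := hconv.le_on_segment (Set.mem_univ x) (Set.mem_univ μ) hmem
        rw [hg1μ] at this
        calc g1 y ≤ max (g1 x) 0 := this
          _ ≤ 0 := max_le h1x le_rfl
      have hanti : AntitoneOn g (Set.Icc x μ) := by
        apply antitoneOn_of_deriv_nonpos (convex_Icc x μ) hgdiff.continuous.continuousOn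
          hgdiff.differentiableOn
        intro y hy
        rw [hderivg]
        rw [interior_Icc] at hy
        exact hseg y ⟨hy.1.le, hy.2.le⟩
      have := hanti (Set.left_mem_Icc.2 hxμ.le) (Set.right_mem_Icc.2 hxμ.le) hxμ.le
      rw [hgμ] at this; exact this
    · -- g1 > 0 at x ⇒ g1 ≥ 0 on [0, x], g monotone there
      have hseg : ∀ y ∈ Set.Icc (0:ℝ) x, 0 ≤ g1 y := by
        intro y hy
        by_contra hneg
        push_neg at hneg
        have hmem : x ∈ segment ℝ y μ := by
          rw [segment_eq_Icc (hy.2.trans hxμ.le)]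
          exact ⟨hy.2, hxμ.le⟩
        have := hconv.le_on_segment (Set.mem_univ y) (Set.mem_univ μ) hmem
        rw [hg1μ] at this
        have : g1 x ≤ 0 := this.trans (max_le hneg.le le_rfl)
        linarith
      have hmono : MonotoneOn g (Set.Icc 0 x) := by
        apply monotoneOn_of_deriv_nonneg (convex_Icc 0 x) hgdiff.continuous.continuousOn
          hgdiff.differentiableOn
        intro y hy
        rw [hderivg]
        rw [interior_Icc] at hy
        exact hseg y ⟨hy.1.le, hy.2.le⟩
      have := hmono (Set.left_mem_Icc.2 hx) (Set.right_mem_Icc.2 hx) hx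
      rw [hg0] at this; exact this

/-- For a nonnegative random variable `X` with mean `μ > 0` and `t > 0`,
`E[e^{tX}] - e^{tμ} ≥ ((1 - e^{tμ} + tμe^{tμ})/μ²)·Var(X)`, and this constant
is strictly positive. -/
theorem stmt_9 {Ω : Type*} [MeasureSpace Ω] [IsProbabilityMeasure (volume : Measure Ω)]
    (X : Ω → ℝ) (μ t : ℝ) (hμ : 0 < μ) (ht : 0 < t)
    (hX : ∀ᵐ ω, 0 ≤ X ω)
    (hXint : Integrable X) (hmean : ∫ ω, X ω = μ)
    (hX2 : Integrable (fun ω => (X ω) ^ 2))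
    (hmgf : Integrable (fun ω => Real.exp (t * X ω))) :
    (∫ ω, Real.exp (t * X ω)) - Real.exp (t * μ) ≥
        (1 - Real.exp (t * μ) + t * μ * Real.exp (t * μ)) / μ ^ 2 *
          ∫ ω, (X ω - μ) ^ 2 ∧
      0 < (1 - Real.exp (t * μ) + t * μ * Real.exp (t * μ)) / μ ^ 2 := by
  have hc : 0 < (1 - Real.exp (t * μ) + t * μ * Real.exp (t * μ)) / μ ^ 2 :=
    div_pos (by have := const_pos (t * μ) (by positivity); nlinarith) (by positivity)
  refine ⟨?_, hc⟩
  set c := (1 - Real.exp (t * μ) + t * μ * Real.exp (t * μ)) / μ ^ 2 with hcdef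
  have hXm : Integrable (fun ω => (X ω - μ) ^ 2) := by
    have h : (fun ω => (X ω - μ) ^ 2) = fun ω => X ω ^ 2 - (2 * μ) * X ω + μ ^ 2 := by
      funext ω; ring
    rw [h]
    exact (hX2.sub (hXint.const_mul _)).add (integrable_const _)
  have hXmμ : Integrable (fun ω => X ω - μ) := hXint.sub (integrable_const μ)
  have hR : Integrable (fun ω =>
      Real.exp (t * X ω) - Real.exp (t * μ) - t * Real.exp (t * μ) * (X ω - μ)) :=
    (hmgf.sub (integrable_const _)).sub (hXmμ.const_mul _)
  have hptw : ∀ᵐ ω, c * (X ω - μ) ^ 2 ≤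
      Real.exp (t * X ω) - Real.exp (t * μ) - t * Real.exp (t * μ) * (X ω - μ) := by
    filter_upwards [hX] with ω hω
    exact key_ineq μ t hμ ht _ hω
  have hIneq := integral_mono_ae (hXm.const_mul c) hR hptw
  rw [integral_const_mul] at hIneq
  have hRint : (∫ ω, (Real.exp (t * X ω) - Real.exp (t * μ)
      - t * Real.exp (t * μ) * (X ω - μ))) = (∫ ω, Real.exp (t * X ω)) - Real.exp (t * μ) := by
    have hA : Integrable (fun ω => Real.exp (t * X ω) - Real.exp (t * μ)) :=
      hmgf.sub (integrable_const _)
    have hB : Integrable (fun ω => t * Real.exp (t * μ) * (X ω - μ)) := hXmμ.const_mul _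
    have e1 := integral_sub hA hB
    have e2 := integral_sub hmgf (integrable_const (Real.exp (t * μ)))
    have e3 : (∫ ω, t * Real.exp (t * μ) * (X ω - μ)) =
        t * Real.exp (t * μ) * ∫ ω, X ω - μ := integral_const_mul _ _
    have e4 := integral_sub hXint (integrable_const μ)
    have e5 : ∫ (_ : Ω), Real.exp (t * μ) = Real.exp (t * μ) := by simp
    have e6 : ∫ (_ : Ω), μ = μ := by simp
    rw [e1, e2, e3, e4, e5, e6, hmean]
    ring
  rw [hRint] at hIneq
  exact hIneq
end

section
/- For t > 0 and μ ∈ ℝ, the function h(x) = (e^{tx} - e^{tμ})/(x-μ)² - te^{tμ}/(x-μ) satisfies lim_{x→-∞} h(x) = 0 and lim_{x→+∞} h(x) = +∞, and h is monotonically increasing on ℝ\{μ}. -/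
open Filter Set

private noncomputable def gfun : ℝ → ℝ := fun u => (Real.exp u - 1) / u ^ 2 - 1 / u

private noncomputable def phi : ℝ → ℝ := fun u => (u - 2) * Real.exp u + u + 2

private lemma phi_hasDeriv (u : ℝ) : HasDerivAt phi ((u - 1) * Real.exp u + 1) u := by
  have h1 : HasDerivAt (fun u : ℝ => (u - 2) * Real.exp u)
      (1 * Real.exp u + (u - 2) * Real.exp u) u :=
    ((hasDerivAt_id u).sub_const 2).mul (Real.hasDerivAt_exp u)
  have h2 := (h1.add (hasDerivAt_id u)).add_const 2
  refine h2.congr_deriv ?_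
  ring

private lemma phi_deriv_nonneg (u : ℝ) : 0 ≤ (u - 1) * Real.exp u + 1 := by
  rcases le_or_gt 1 u with h | h
  · nlinarith [Real.exp_pos u]
  · have h1 : (1 - u) * Real.exp u ≤ Real.exp (-u) * Real.exp u := by
      apply mul_le_mul_of_nonneg_right _ (Real.exp_pos u).le
      have := Real.add_one_le_exp (-u); linarith
    rw [← Real.exp_add] at h1
    simp at h1
    nlinarith [Real.exp_pos u]

private lemma phi_mono : Monotone phi := by
  apply monotone_of_deriv_nonneg
  · exact fun u => (phi_hasDeriv u).differentiableAt
  · intro u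
    rw [(phi_hasDeriv u).deriv]
    exact phi_deriv_nonneg u

private lemma phi_zero : phi 0 = 0 := by simp [phi]

private lemma phi_nonneg {u : ℝ} (h : 0 ≤ u) : 0 ≤ phi u := by
  have := phi_mono h; rwa [phi_zero] at this

private lemma phi_nonpos {u : ℝ} (h : u ≤ 0) : phi u ≤ 0 := by
  have := phi_mono h; rwa [phi_zero] at this

private lemma gfun_hasDeriv {u : ℝ} (hu : u ≠ 0) : HasDerivAt gfun (phi u / u ^ 3) u := by
  have h1 : HasDerivAt (fun u : ℝ => (Real.exp u - 1) / u ^ 2)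
      ((Real.exp u * u ^ 2 - (Real.exp u - 1) * (2 * u ^ 1)) / (u ^ 2) ^ 2) u := by
    exact ((Real.hasDerivAt_exp u).sub_const 1).div (hasDerivAt_pow 2 u) (pow_ne_zero 2 hu)
  have h2 : HasDerivAt (fun u : ℝ => 1 / u) (-(u ^ 2)⁻¹) u := by
    simpa using (hasDerivAt_inv hu)
  refine (h1.sub h2).congr_deriv ?_
  field_simp [phi]
  unfold phi
  ring

private lemma gfun_mono_neg : MonotoneOn gfun (Iio (0 : ℝ)) := by
  apply monotoneOn_of_deriv_nonneg (convex_Iio 0)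
  · intro u hu
    exact (gfun_hasDeriv (ne_of_lt hu)).differentiableAt.continuousAt.continuousWithinAt
  · intro u hu
    rw [interior_Iio] at hu
    exact (gfun_hasDeriv (ne_of_lt hu)).differentiableAt.differentiableWithinAt
  · intro u hu
    rw [interior_Iio] at hu
    rw [(gfun_hasDeriv (ne_of_lt hu)).deriv]
    have hu' : u < 0 := hu
    have h3 : u ^ 3 ≤ 0 := Odd.pow_nonpos ⟨1, by norm_num⟩ hu'.le
    exact div_nonneg_iff.mpr (Or.inr ⟨phi_nonpos hu.le, h3⟩)

private lemma gfun_mono_pos : MonotoneOn gfun (Ioi (0 : ℝ)) := by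
  apply monotoneOn_of_deriv_nonneg (convex_Ioi 0)
  · intro u hu
    exact (gfun_hasDeriv (ne_of_gt hu)).differentiableAt.continuousAt.continuousWithinAt
  · intro u hu
    rw [interior_Ioi] at hu
    exact (gfun_hasDeriv (ne_of_gt hu)).differentiableAt.differentiableWithinAt
  · intro u hu
    rw [interior_Ioi] at hu
    rw [(gfun_hasDeriv (ne_of_gt hu)).deriv]
    exact div_nonneg (phi_nonneg hu.le) (pow_pos hu 3).le

private lemma exp_le_quad {u : ℝ} (h : u ≤ 0) : Real.exp u ≤ 1 + u + u ^ 2 / 2 := by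
  set ψ : ℝ → ℝ := fun v => 1 + v + v ^ 2 / 2 - Real.exp v with hψ
  have hd : ∀ v : ℝ, HasDerivAt ψ (1 + v - Real.exp v) v := by
    intro v
    have h1 : HasDerivAt (fun v : ℝ => 1 + v + v ^ 2 / 2 - Real.exp v)
        ((0 + 1 + (2 * v ^ 1) / 2) - Real.exp v) v := by
      exact (((hasDerivAt_const v 1).add (hasDerivAt_id v)).add
        ((hasDerivAt_pow 2 v).div_const 2)).sub (Real.hasDerivAt_exp v)
    convert h1 using 1; ring
  have hanti : Antitone ψ := by
    apply antitone_of_deriv_nonpos (fun v => (hd v).differentiableAt)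
    intro v
    rw [(hd v).deriv]
    have := Real.add_one_le_exp v
    linarith
  have := hanti h
  have hψ0 : ψ 0 = 0 := by simp [hψ]
  rw [hψ0] at this
  simp only [hψ] at this
  linarith

private lemma quad_le_exp {u : ℝ} (h : 0 ≤ u) : 1 + u + u ^ 2 / 2 ≤ Real.exp u := by
  have := Real.sum_le_exp_of_nonneg h 3
  simp [Finset.sum_range_succ, Nat.factorial] at this
  linarith

private lemma gfun_rw {u : ℝ} (hu : u ≠ 0) : gfun u = (Real.exp u - 1 - u) / u ^ 2 := by
  rw [gfun]
  field_simp

private lemma gfun_le_half {u : ℝ} (hu : u < 0) : gfun u ≤ 1 / 2 := by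
  have h := exp_le_quad hu.le
  have hu2 : (0:ℝ) < u ^ 2 := by nlinarith
  rw [gfun_rw (ne_of_lt hu), div_le_iff₀ hu2]
  nlinarith

private lemma half_le_gfun {u : ℝ} (hu : 0 < u) : 1 / 2 ≤ gfun u := by
  have h := quad_le_exp hu.le
  have hu2 : (0:ℝ) < u ^ 2 := by positivity
  rw [gfun_rw (ne_of_gt hu), le_div_iff₀ hu2]
  nlinarith

private lemma gfun_mono : MonotoneOn gfun ({0}ᶜ : Set ℝ) := by
  intro a ha b hb hab
  simp only [mem_compl_iff, mem_singleton_iff] at ha hb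
  rcases lt_or_gt_of_ne ha with ha' | ha'
  · rcases lt_or_gt_of_ne hb with hb' | hb'
    · exact gfun_mono_neg ha' hb' hab
    · exact le_trans (gfun_le_half ha') (half_le_gfun hb')
  · have hb' : 0 < b := lt_of_lt_of_le ha' hab
    exact gfun_mono_pos ha' hb' hab

private lemma gfun_eq (u : ℝ) :
    gfun u = Real.exp u * (u ^ 2)⁻¹ - (u ^ 2)⁻¹ - u⁻¹ := by
  rw [gfun, sub_div]
  rw [div_eq_mul_inv, div_eq_mul_inv, one_mul, one_div]

private lemma sq_atBot : Tendsto (fun u : ℝ => u ^ 2) atBot atTop := by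
  have h := (tendsto_pow_atTop (α := ℝ) (n := 2) (by norm_num)).comp tendsto_neg_atBot_atTop
  refine h.congr (fun u => ?_)
  simp [Function.comp, neg_pow]

private lemma gfun_atBot : Tendsto gfun atBot (nhds 0) := by
  have hinv : Tendsto (fun u : ℝ => (u ^ 2)⁻¹) atBot (nhds 0) :=
    sq_atBot.inv_tendsto_atTop
  have h1 : Tendsto (fun u : ℝ => Real.exp u * (u ^ 2)⁻¹) atBot (nhds 0) := by
    have := Real.tendsto_exp_atBot.mul hinv
    simpa using this
  have h2 : Tendsto (fun u : ℝ => u⁻¹) atBot (nhds 0) := by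
    have := (tendsto_neg_atBot_atTop :
      Tendsto (fun u : ℝ => -u) atBot atTop).inv_tendsto_atTop.neg
    simp only [neg_zero] at this
    refine this.congr (fun u => ?_)
    show -(-u)⁻¹ = u⁻¹
    rw [inv_neg, neg_neg]
  have := (h1.sub hinv).sub h2
  simp only [sub_zero] at this
  exact Tendsto.congr (fun u => (gfun_eq u).symm) this

private lemma gfun_atTop : Tendsto gfun atTop atTop := by
  have h1 : Tendsto (fun u : ℝ => Real.exp u / u ^ 2) atTop atTop :=
    Real.tendsto_exp_div_pow_atTop 2
  have hinv : Tendsto (fun u : ℝ => (u ^ 2)⁻¹) atTop (nhds 0) :=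
    ((tendsto_pow_atTop (two_ne_zero)).inv_tendsto_atTop)
  have h2 : Tendsto (fun u : ℝ => -(u ^ 2)⁻¹ - u⁻¹) atTop (nhds 0) := by
    have := (hinv.neg).sub tendsto_inv_atTop_zero
    simpa using this
  have := h1.atTop_add h2
  refine this.congr (fun u => ?_)
  rw [gfun_eq, div_eq_mul_inv]
  ring

private lemma key_eq (t μ x : ℝ) (ht : t ≠ 0) (hx : x ≠ μ) :
    (Real.exp (t * x) - Real.exp (t * μ)) / (x - μ) ^ 2 -
      t * Real.exp (t * μ) / (x - μ) =
    t ^ 2 * Real.exp (t * μ) * gfun (t * (x - μ)) := by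
  have hxμ : x - μ ≠ 0 := sub_ne_zero.mpr hx
  have hexp : Real.exp (t * (x - μ)) = Real.exp (t * x) / Real.exp (t * μ) := by
    rw [mul_sub, Real.exp_sub]
  rw [gfun, hexp]
  have he : Real.exp (t * μ) ≠ 0 := Real.exp_ne_zero _
  field_simp

/-- For `t > 0`, `h(x) = (e^{tx}-e^{tμ})/(x-μ)² - te^{tμ}/(x-μ)` tends to `0` at `-∞`,
to `+∞` at `+∞`, and is monotonically increasing on `ℝ \ {μ}`. -/
theorem stmt_10 (t μ : ℝ) (ht : 0 < t) :
    Tendsto (fun x : ℝ =>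
        (Real.exp (t * x) - Real.exp (t * μ)) / (x - μ) ^ 2 -
          t * Real.exp (t * μ) / (x - μ)) atBot (nhds 0) ∧
      Tendsto (fun x : ℝ =>
        (Real.exp (t * x) - Real.exp (t * μ)) / (x - μ) ^ 2 -
          t * Real.exp (t * μ) / (x - μ)) atTop atTop ∧
      MonotoneOn (fun x : ℝ =>
        (Real.exp (t * x) - Real.exp (t * μ)) / (x - μ) ^ 2 -
          t * Real.exp (t * μ) / (x - μ)) ({μ}ᶜ) := by
  have hC : 0 < t ^ 2 * Real.exp (t * μ) := by positivity
  have hlin_atBot : Tendsto (fun x : ℝ => t * (x - μ)) atBot atBot := by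
    have h1 : Tendsto (fun x : ℝ => x - μ) atBot atBot :=
      tendsto_atBot_add_const_right atBot (-μ) tendsto_id
    exact h1.const_mul_atBot ht
  have hlin_atTop : Tendsto (fun x : ℝ => t * (x - μ)) atTop atTop := by
    have h1 : Tendsto (fun x : ℝ => x - μ) atTop atTop :=
      tendsto_atTop_add_const_right atTop (-μ) tendsto_id
    exact h1.const_mul_atTop ht
  refine ⟨?_, ?_, ?_⟩
  · have h := (gfun_atBot.comp hlin_atBot).const_mul (t ^ 2 * Real.exp (t * μ))
    rw [mul_zero] at h
    refine h.congr' ?_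
    filter_upwards [eventually_lt_atBot μ] with x hx
    exact (key_eq t μ x ht.ne' hx.ne).symm
  · have h := (gfun_atTop.comp hlin_atTop).const_mul_atTop hC
    refine h.congr' ?_
    filter_upwards [eventually_gt_atTop μ] with x hx
    exact (key_eq t μ x ht.ne' hx.ne').symm
  · intro x hx y hy hxy
    simp only [mem_compl_iff, mem_singleton_iff] at hx hy
    simp only []
    rw [key_eq t μ x ht.ne' hx, key_eq t μ y ht.ne' hy]
    have hgx : t * (x - μ) ∈ ({0}ᶜ : Set ℝ) := by
      simp only [mem_compl_iff, mem_singleton_iff]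
      exact mul_ne_zero ht.ne' (sub_ne_zero.mpr hx)
    have hgy : t * (y - μ) ∈ ({0}ᶜ : Set ℝ) := by
      simp only [mem_compl_iff, mem_singleton_iff]
      exact mul_ne_zero ht.ne' (sub_ne_zero.mpr hy)
    have hle : t * (x - μ) ≤ t * (y - μ) := by nlinarith
    exact mul_le_mul_of_nonneg_left (gfun_mono hgx hgy hle) hC.le
end

section
/- For μ > 0 fixed, the function h(x) = (-log x + log μ)/(x-μ)² + 1/(μ(x-μ)), defined for x > 0, x ≠ μ, is monotonically decreasing in x. -/
open Set

private noncomputable def hfun (μ : ℝ) : ℝ → ℝ := fun x =>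
  (-Real.log x + Real.log μ) / (x - μ) ^ 2 + 1 / (μ * (x - μ))

private noncomputable def Nfun (μ : ℝ) : ℝ → ℝ := fun x =>
  (x - μ) ^ 2 / (μ * x) - 2 * (-Real.log x + Real.log μ + (x - μ) / μ)

private noncomputable def Gfun (μ : ℝ) : ℝ → ℝ := fun x =>
  -Real.log x + Real.log μ + (x - μ) / μ - (x - μ) ^ 2 / (2 * μ ^ 2)

private lemma hasDerivAt_hfun (μ : ℝ) (hμ : 0 < μ) {x : ℝ} (hx : 0 < x) (hxμ : x ≠ μ) :
    HasDerivAt (hfun μ) (Nfun μ x / (x - μ) ^ 3) x := by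
  have hsub : x - μ ≠ 0 := sub_ne_zero.mpr hxμ
  have hd1 : HasDerivAt (fun x : ℝ => -Real.log x + Real.log μ) (-x⁻¹) x :=
    (Real.hasDerivAt_log hx.ne').neg.add_const _
  have hd2 : HasDerivAt (fun x : ℝ => (x - μ) ^ 2) (2 * (x - μ)) x := by
    have := ((hasDerivAt_id x).sub_const μ).pow 2
    simpa [Pi.pow_def] using this
  have hd3 : HasDerivAt (fun x : ℝ => μ * (x - μ)) μ x := by
    have := ((hasDerivAt_id x).sub_const μ).const_mul μ
    simpa using this
  have hA := hd1.div hd2 (pow_ne_zero 2 hsub)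
  have hB := (hasDerivAt_const x (1 : ℝ)).div hd3 (mul_ne_zero hμ.ne' hsub)
  have hAB := hA.add hB
  refine hAB.congr_deriv ?_
  unfold Nfun
  field_simp
  ring

private lemma hasDerivAt_Nfun (μ : ℝ) (hμ : 0 < μ) {x : ℝ} (hx : 0 < x) :
    HasDerivAt (Nfun μ) (-(x - μ) ^ 2 / (μ * x ^ 2)) x := by
  have hd1 : HasDerivAt (fun x : ℝ => (x - μ) ^ 2) (2 * (x - μ)) x := by
    have := ((hasDerivAt_id x).sub_const μ).pow 2
    simpa [Pi.pow_def] using this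
  have hd3 : HasDerivAt (fun x : ℝ => μ * x) μ x := by
    simpa using (hasDerivAt_id x).const_mul μ
  have hA := hd1.div hd3 (mul_ne_zero hμ.ne' hx.ne')
  have hd4 : HasDerivAt (fun x : ℝ => -Real.log x + Real.log μ + (x - μ) / μ)
      (-x⁻¹ + 1 / μ) x := by
    have h1 := ((Real.hasDerivAt_log hx.ne').neg.add_const (Real.log μ))
    have h2 : HasDerivAt (fun x : ℝ => (x - μ) / μ) (1 / μ) x := by
      have := ((hasDerivAt_id x).sub_const μ).div_const μ
      simpa using this
    exact h1.add h2
  have hAB := hA.sub ((hd4.const_mul 2))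
  refine hAB.congr_deriv ?_
  field_simp
  ring

private lemma hasDerivAt_Gfun (μ : ℝ) (hμ : 0 < μ) {x : ℝ} (hx : 0 < x) :
    HasDerivAt (Gfun μ) (-(x - μ) ^ 2 / (x * μ ^ 2)) x := by
  have h1 := ((Real.hasDerivAt_log hx.ne').neg.add_const (Real.log μ))
  have h2 : HasDerivAt (fun x : ℝ => (x - μ) / μ) (1 / μ) x := by
    have := ((hasDerivAt_id x).sub_const μ).div_const μ
    simpa using this
  have h3 : HasDerivAt (fun x : ℝ => (x - μ) ^ 2 / (2 * μ ^ 2)) (2 * (x - μ) / (2 * μ ^ 2)) x := by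
    have := (((hasDerivAt_id x).sub_const μ).pow 2).div_const (2 * μ ^ 2)
    simpa using this
  have := (h1.add h2).sub h3
  refine this.congr_deriv ?_
  field_simp
  ring

private lemma Nfun_anti (μ : ℝ) (hμ : 0 < μ) : AntitoneOn (Nfun μ) (Ioi 0) := by
  apply antitoneOn_of_deriv_nonpos (convex_Ioi 0)
  · intro x hx
    exact (hasDerivAt_Nfun μ hμ hx).continuousAt.continuousWithinAt
  · intro x hx
    rw [interior_Ioi] at hx
    exact (hasDerivAt_Nfun μ hμ hx).differentiableAt.differentiableWithinAt
  · intro x hx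
    rw [interior_Ioi] at hx
    rw [(hasDerivAt_Nfun μ hμ hx).deriv]
    have hx' : (0:ℝ) < x := hx
    apply div_nonpos_of_nonpos_of_nonneg
    · nlinarith [sq_nonneg (x - μ)]
    · positivity

private lemma Gfun_anti (μ : ℝ) (hμ : 0 < μ) : AntitoneOn (Gfun μ) (Ioi 0) := by
  apply antitoneOn_of_deriv_nonpos (convex_Ioi 0)
  · intro x hx
    exact (hasDerivAt_Gfun μ hμ hx).continuousAt.continuousWithinAt
  · intro x hx
    rw [interior_Ioi] at hx
    exact (hasDerivAt_Gfun μ hμ hx).differentiableAt.differentiableWithinAt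
  · intro x hx
    rw [interior_Ioi] at hx
    rw [(hasDerivAt_Gfun μ hμ hx).deriv]
    have hx' : (0:ℝ) < x := hx
    apply div_nonpos_of_nonpos_of_nonneg
    · nlinarith [sq_nonneg (x - μ)]
    · positivity

private lemma hfun_sub (μ : ℝ) (hμ : 0 < μ) {x : ℝ} (hx : 0 < x) (hxμ : x ≠ μ) :
    hfun μ x - 1 / (2 * μ ^ 2) = Gfun μ x / (x - μ) ^ 2 := by
  have hsub : x - μ ≠ 0 := sub_ne_zero.mpr hxμ
  unfold hfun Gfun
  field_simp

private lemma hfun_anti_Ioo (μ : ℝ) (hμ : 0 < μ) : AntitoneOn (hfun μ) (Ioo 0 μ) := by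
  apply antitoneOn_of_deriv_nonpos (convex_Ioo 0 μ)
  · intro x hx
    exact (hasDerivAt_hfun μ hμ hx.1 hx.2.ne).continuousAt.continuousWithinAt
  · intro x hx
    rw [interior_Ioo] at hx
    exact (hasDerivAt_hfun μ hμ hx.1 hx.2.ne).differentiableAt.differentiableWithinAt
  · intro x hx
    rw [interior_Ioo] at hx
    rw [(hasDerivAt_hfun μ hμ hx.1 hx.2.ne).deriv]
    have hN : 0 ≤ Nfun μ x := by
      have h0 : Nfun μ μ = 0 := by
        unfold Nfun
        field_simp
        ring
      have := Nfun_anti μ hμ hx.1 hμ hx.2.le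
      rw [h0] at this
      exact this
    have hcube : (x - μ) ^ 3 < 0 := by
      have h1 : x - μ < 0 := sub_neg.mpr hx.2
      have h2 := mul_pos_of_neg_of_neg h1 h1
      nlinarith
    exact div_nonpos_of_nonneg_of_nonpos hN hcube.le

private lemma hfun_anti_Ioi (μ : ℝ) (hμ : 0 < μ) : AntitoneOn (hfun μ) (Ioi μ) := by
  apply antitoneOn_of_deriv_nonpos (convex_Ioi μ)
  · intro x hx
    exact (hasDerivAt_hfun μ hμ (hμ.trans hx) (ne_of_gt hx)).continuousAt.continuousWithinAt
  · intro x hx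
    rw [interior_Ioi] at hx
    exact (hasDerivAt_hfun μ hμ (hμ.trans hx) (ne_of_gt hx)).differentiableAt.differentiableWithinAt
  · intro x hx
    rw [interior_Ioi] at hx
    rw [(hasDerivAt_hfun μ hμ (hμ.trans hx) (ne_of_gt hx)).deriv]
    have hN : Nfun μ x ≤ 0 := by
      have h0 : Nfun μ μ = 0 := by
        unfold Nfun
        field_simp
        ring
      have := Nfun_anti μ hμ hμ (hμ.trans hx) hx.le
      rw [h0] at this
      exact this
    have hcube : 0 < (x - μ) ^ 3 := pow_pos (sub_pos.mpr hx) 3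
    exact div_nonpos_of_nonpos_of_nonneg hN hcube.le

/-- For `μ > 0`, the function `h(x) = (-log x + log μ)/(x-μ)² + 1/(μ(x-μ))` is
monotonically decreasing on `(0,∞) \ {μ}`. -/
theorem stmt_11 (μ : ℝ) (hμ : 0 < μ) :
    AntitoneOn (fun x : ℝ =>
        (-Real.log x + Real.log μ) / (x - μ) ^ 2 + 1 / (μ * (x - μ)))
      (Ioi 0 \ {μ}) := by
  have key : AntitoneOn (hfun μ) (Ioi 0 \ {μ}) := by
    intro x hx y hy hxy
    have hx0 : (0:ℝ) < x := hx.1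
    have hy0 : (0:ℝ) < y := hy.1
    have hxne : x ≠ μ := hx.2
    have hyne : y ≠ μ := hy.2
    rcases eq_or_lt_of_le hxy with rfl | hlt
    · exact le_refl _
    rcases lt_or_gt_of_ne hxne with hxlt | hxgt
    · rcases lt_or_gt_of_ne hyne with hylt | hygt
      · exact hfun_anti_Ioo μ hμ ⟨hx0, hxlt⟩ ⟨hy0, hylt⟩ hxy
      · -- x < μ < y : go through 1/(2μ²)
        have hGx : 0 ≤ Gfun μ x := by
          have h0 : Gfun μ μ = 0 := by unfold Gfun; field_simp; ring
          have := Gfun_anti μ hμ hx0 hμ hxlt.le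
          rw [h0] at this; exact this
        have hGy : Gfun μ y ≤ 0 := by
          have h0 : Gfun μ μ = 0 := by unfold Gfun; field_simp; ring
          have := Gfun_anti μ hμ hμ hy0 hygt.le
          rw [h0] at this; exact this
        have h1 : 1 / (2 * μ ^ 2) ≤ hfun μ x := by
          have := hfun_sub μ hμ hx0 hxne
          nlinarith [sq_nonneg (x - μ), div_nonneg hGx (sq_nonneg (x - μ))]
        have h2 : hfun μ y ≤ 1 / (2 * μ ^ 2) := by
          have := hfun_sub μ hμ hy0 hyne
          nlinarith [div_nonpos_of_nonpos_of_nonneg hGy (sq_nonneg (y - μ))]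
        linarith
    · have hygt : μ < y := lt_trans hxgt hlt
      exact hfun_anti_Ioi μ hμ hxgt hygt hxy
  exact key
end

section
/- Let X be a positive random variable supported on (a,b) ⊂ (0,∞) with mean μ and finite variance, where E[log X] exists. Then log μ - E[log X] ≥ (lim_{x→b} h(x;μ)) · Var(X), where h(x;μ) = (-log x + log μ)/(x-μ)² + 1/(μ(x-μ)); in particular if b < ∞ this gives a strictly positive lower bound on the gap in the AM-GM inequality when Var(X) > 0. -/
open MeasureTheory Set Filter

noncomputable def Hf (μ y : ℝ) : ℝ := ∫ s in (0:ℝ)..1, (1 - s) / (μ + s * (y - μ)) ^ 2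

lemma denom_pos {μ y : ℝ} (hμ : 0 < μ) (hy : 0 < y) {s : ℝ} (hs0 : 0 ≤ s) (hs1 : s ≤ 1) :
    0 < μ + s * (y - μ) := by
  nlinarith [mul_nonneg (sub_nonneg.mpr hs1) (sub_nonneg.mpr (min_le_left μ y)),
    mul_nonneg hs0 (sub_nonneg.mpr (min_le_right μ y)), lt_min hμ hy]

lemma Hf_intble {μ y : ℝ} (hμ : 0 < μ) (hy : 0 < y) :
    IntervalIntegrable (fun s => (1 - s) / (μ + s * (y - μ)) ^ 2) volume 0 1 := by
  apply ContinuousOn.intervalIntegrable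
  rw [uIcc_of_le (by norm_num)]
  apply ContinuousOn.div (by fun_prop) (by fun_prop)
  intro s hs
  exact pow_ne_zero _ (denom_pos hμ hy hs.1 hs.2).ne'

lemma Hf_eq {μ y : ℝ} (hμ : 0 < μ) (hy : 0 < y) (hne : y ≠ μ) :
    Hf μ y = (-Real.log y + Real.log μ + (y - μ) / μ) / (y - μ) ^ 2 := by
  set c := y - μ with hc
  have hc0 : c ≠ 0 := sub_ne_zero.mpr hne
  have key : ∀ s ∈ Set.uIcc (0:ℝ) 1,
      HasDerivAt (fun s => -(y / c ^ 2) / (μ + s * c) - Real.log (μ + s * c) / c ^ 2)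
        ((1 - s) / (μ + s * c) ^ 2) s := by
    intro s hs
    rw [uIcc_of_le (by norm_num)] at hs
    have hd : 0 < μ + s * c := denom_pos hμ hy hs.1 hs.2
    have h0 : HasDerivAt (fun s : ℝ => μ + s * c) c s := by
      simpa using ((hasDerivAt_id s).mul_const c).const_add μ
    have h1 : HasDerivAt (fun s : ℝ => (μ + s * c)⁻¹) (-c / (μ + s * c) ^ 2) s := by
      exact h0.inv hd.ne'
    have h2 : HasDerivAt (fun s : ℝ => Real.log (μ + s * c)) (c / (μ + s * c)) s :=
      h0.log hd.ne'
    have h3 := ((h1.const_mul (-(y / c ^ 2))).sub (h2.div_const (c ^ 2)))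
    convert h3 using 1 <;> try rfl
    · field_simp
      ring
  have hint : IntervalIntegrable (fun s => (1 - s) / (μ + s * c) ^ 2) volume 0 1 :=
    Hf_intble hμ hy
  have heval := intervalIntegral.integral_eq_sub_of_hasDerivAt key hint
  have h10 : μ + (1:ℝ) * c = y := by rw [hc]; ring
  have h00 : μ + (0:ℝ) * c = μ := by ring
  rw [h10, h00] at heval
  rw [Hf, heval]
  field_simp
  ring

lemma sq_mul_Hf {μ y : ℝ} (hμ : 0 < μ) (hy : 0 < y) :
    (y - μ) ^ 2 * Hf μ y = -Real.log y + Real.log μ + (y - μ) / μ := by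
  rcases eq_or_ne y μ with h | h
  · subst h; simp
  · rw [Hf_eq hμ hy h]
    have : (y - μ) ^ 2 ≠ 0 := pow_ne_zero _ (sub_ne_zero.mpr h)
    field_simp

lemma Hf_anti {μ x b : ℝ} (hμ : 0 < μ) (hx : 0 < x) (hxb : x ≤ b) :
    Hf μ b ≤ Hf μ x := by
  have hb : 0 < b := lt_of_lt_of_le hx hxb
  apply intervalIntegral.integral_mono_on (by norm_num) (Hf_intble hμ hb) (Hf_intble hμ hx)
  intro s hs
  have h1 : 0 < μ + s * (x - μ) := denom_pos hμ hx hs.1 hs.2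
  have h2 : μ + s * (x - μ) ≤ μ + s * (b - μ) := by nlinarith [hs.1]
  gcongr
  linarith [hs.2]

/-- Sharpened AM-GM for a random variable: with `h(x;μ) = (-log x + log μ)/(x-μ)² + 1/(μ(x-μ))`
and `L = lim_{x→b⁻} h(x;μ)`, we have `log μ - E[log X] ≥ L · Var(X)`, and this lower
bound is strictly positive when `Var(X) > 0` (for finite `b`). -/
theorem stmt_13 {Ω : Type*} [MeasureSpace Ω] [IsProbabilityMeasure (volume : Measure Ω)]
    (a b : ℝ) (ha : 0 < a) (hab : a < b) (X : Ω → ℝ) (μ L : ℝ)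
    (hX : ∀ᵐ ω, X ω ∈ Ioo a b)
    (hXint : Integrable X) (hmean : ∫ ω, X ω = μ)
    (hX2 : Integrable (fun ω => (X ω) ^ 2))
    (hlog : Integrable (fun ω => Real.log (X ω)))
    (hL : Tendsto (fun x : ℝ =>
        (-Real.log x + Real.log μ) / (x - μ) ^ 2 + 1 / (μ * (x - μ)))
      (nhdsWithin b (Iio b)) (nhds L)) :
    Real.log μ - (∫ ω, Real.log (X ω)) ≥ L * ∫ ω, (X ω - μ) ^ 2 ∧
      (0 < ∫ ω, (X ω - μ) ^ 2 → 0 < L * ∫ ω, (X ω - μ) ^ 2) := by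
  -- μ ≥ a
  have haμ : a ≤ μ := by
    have := integral_mono_ae (integrable_const a) hXint
      (by filter_upwards [hX] with ω hω; exact hω.1.le)
    rwa [integral_const, probReal_univ, smul_eq_mul, one_mul, hmean] at this
  have hμ0 : 0 < μ := lt_of_lt_of_le ha haμ
  -- μ < b
  have hμb : μ < b := by
    have hle : μ ≤ b := by
      have := integral_mono_ae hXint (integrable_const b)
        (by filter_upwards [hX] with ω hω; exact hω.2.le)
      rwa [integral_const, probReal_univ, smul_eq_mul, one_mul, hmean] at this
    rcases lt_or_eq_of_le hle with h | h
    · exact h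
    · exfalso
      have hb713 : Integrable (fun ω => b - X ω) := (integrable_const b).sub hXint
      have hnn : 0 ≤ᵐ[volume] fun ω => b - X ω := by
        filter_upwards [hX] with ω hω; simp [hω.2.le]
      have hz : ∫ ω, (b - X ω) = 0 := by
        rw [integral_sub (integrable_const b) hXint, integral_const, probReal_univ, hmean]
        simp [h]
      rw [integral_eq_zero_iff_of_nonneg_ae hnn hb713] at hz
      have := (hz.and hX).exists
      obtain ⟨ω, h1, h2⟩ := this
      simp at h1
      linarith [h2.2]
  have hb0 : 0 < b := hμ0.trans hμb
  have hbne : b ≠ μ := hμb.ne'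
  -- identify L
  have hcont : ContinuousAt (fun x : ℝ =>
      (-Real.log x + Real.log μ) / (x - μ) ^ 2 + 1 / (μ * (x - μ))) b := by
    apply ContinuousAt.add
    · exact ContinuousAt.div ((Real.continuousAt_log hb0.ne').neg.add continuousAt_const)
        (by fun_prop) (pow_ne_zero _ (sub_ne_zero.mpr hbne))
    · exact ContinuousAt.div continuousAt_const (by fun_prop)
        (mul_ne_zero hμ0.ne' (sub_ne_zero.mpr hbne))
  have hLval : L = (-Real.log b + Real.log μ) / (b - μ) ^ 2 + 1 / (μ * (b - μ)) :=
    tendsto_nhds_unique hL (tendsto_nhdsWithin_of_tendsto_nhds hcont)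
  have hLHf : L = Hf μ b := by
    rw [hLval, Hf_eq hμ0 hb0 hbne]
    have h1 : b - μ ≠ 0 := sub_ne_zero.mpr hbne
    field_simp
  have hLpos : 0 < L := by
    have hnum : 0 < -Real.log b + Real.log μ + (b - μ) / μ := by
      have h := Real.log_lt_sub_one_of_pos (div_pos hb0 hμ0)
        (ne_of_gt ((one_lt_div hμ0).mpr hμb))
      rw [Real.log_div hb0.ne' hμ0.ne'] at h
      have : (b - μ) / μ = b / μ - 1 := by field_simp
      linarith
    rw [hLHf, Hf_eq hμ0 hb0 hbne]
    exact div_pos hnum (pow_pos (sub_pos.mpr hμb) 2)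
  -- pointwise inequality
  have hpoint : ∀ᵐ ω, L * (X ω - μ) ^ 2 - (X ω - μ) / μ ≤ Real.log μ - Real.log (X ω) := by
    filter_upwards [hX] with ω hω
    set x := X ω with hxdef
    have hx0 : 0 < x := ha.trans hω.1
    have h1 : L ≤ Hf μ x := hLHf ▸ Hf_anti hμ0 hx0 hω.2.le
    have h2 : (x - μ) ^ 2 * Hf μ x = -Real.log x + Real.log μ + (x - μ) / μ :=
      sq_mul_Hf hμ0 hx0
    nlinarith [sq_nonneg (x - μ)]
  -- integrability
  have hvar_int : Integrable (fun ω => (X ω - μ) ^ 2) := by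
    have : (fun ω => (X ω - μ) ^ 2) = fun ω => ((X ω) ^ 2 - (2 * μ) * X ω) + μ ^ 2 := by
      funext ω; ring
    rw [this]
    exact (hX2.sub (hXint.const_mul _)).add (integrable_const _)
  have hsub_int : Integrable (fun ω => X ω - μ) := hXint.sub (integrable_const μ)
  have hdiv_int : Integrable (fun ω => (X ω - μ) / μ) := hsub_int.div_const μ
  have hlhs_int : Integrable (fun ω => L * (X ω - μ) ^ 2 - (X ω - μ) / μ) :=
    (hvar_int.const_mul L).sub hdiv_int
  have hrhs_int : Integrable (fun ω => Real.log μ - Real.log (X ω)) :=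
    (integrable_const _).sub hlog
  have hineq := integral_mono_ae hlhs_int hrhs_int hpoint
  rw [integral_sub (hvar_int.const_mul L) hdiv_int,
    integral_const_mul, integral_div, integral_sub hXint (integrable_const μ),
    integral_const, probReal_univ, hmean,
    integral_sub (integrable_const _) hlog, integral_const, probReal_univ] at hineq
  simp only [ENNReal.toReal_one, one_smul, sub_self, zero_div, sub_zero] at hineq
  constructor
  · linarith
  · intro hvar
    exact mul_pos hLpos hvar
end

section
/- Let X be a positive random variable on (a,b) ⊂ (0,∞) with mean μ, finite variance, and finite E[X^{-1}]. Define h(y;μ) = (y^{-1} - μ^{-1})/(y-μ)² + μ^{-2}/(y-μ). Then ((E[X])^{-1} + lim_{y→a} h(y;μ)·Var(X))^{-1} ≤ (E[X^{-1}])^{-1} ≤ ((E[X])^{-1} + lim_{y→b} h(y;μ)·Var(X))^{-1}, sharpening the harmonic–arithmetic mean inequality. -/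
open MeasureTheory Set

/-- Sharpened harmonic–arithmetic mean inequality: with
`h(y;μ) = (y⁻¹-μ⁻¹)/(y-μ)² + μ⁻²/(y-μ)` (decreasing in `y`),
`(μ⁻¹ + h(a;μ)·Var X)⁻¹ ≤ (E[X⁻¹])⁻¹ ≤ (μ⁻¹ + h(b;μ)·Var X)⁻¹`. -/
theorem stmt_15 {Ω : Type*} [MeasureSpace Ω] [IsProbabilityMeasure (volume : Measure Ω)]
    (a b : ℝ) (ha : 0 < a) (hab : a < b) (X : Ω → ℝ) (μ : ℝ)
    (hX : ∀ᵐ ω, X ω ∈ Ioo a b)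
    (hXint : Integrable X) (hmean : ∫ ω, X ω = μ)
    (hX2 : Integrable (fun ω => (X ω) ^ 2))
    (hinv : Integrable (fun ω => (X ω)⁻¹)) :
    (μ⁻¹ + ((a⁻¹ - μ⁻¹) / (a - μ) ^ 2 + μ⁻¹ ^ 2 / (a - μ)) *
        (∫ ω, (X ω - μ) ^ 2))⁻¹ ≤ (∫ ω, (X ω)⁻¹)⁻¹ ∧
      (∫ ω, (X ω)⁻¹)⁻¹ ≤
        (μ⁻¹ + ((b⁻¹ - μ⁻¹) / (b - μ) ^ 2 + μ⁻¹ ^ 2 / (b - μ)) *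
          (∫ ω, (X ω - μ) ^ 2))⁻¹ := by
  set V := ∫ ω, (X ω - μ) ^ 2 with hV
  set I := ∫ ω, (X ω)⁻¹ with hI
  have hVar_int : Integrable (fun ω => (X ω - μ)^2) := by
    have h : (fun ω => (X ω - μ)^2) = fun ω => ((X ω)^2 - (2*μ)*X ω) + μ^2 := by
      funext ω; ring
    rw [h]
    exact (hX2.sub (hXint.const_mul _)).add (integrable_const _)
  have hVnn : 0 ≤ V := integral_nonneg fun ω => sq_nonneg _
  -- strict mean bounds
  have key : ∀ (f : Ω → ℝ), Integrable f → (∀ᵐ ω, 0 < f ω) → 0 < ∫ ω, f ω := by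
    intro f hfi hfpos
    have hnn : 0 ≤ᵐ[volume] f := hfpos.mono fun ω h => h.le
    rw [integral_pos_iff_support_of_nonneg_ae hnn hfi]
    have h1 : ∀ᵐ ω, ω ∈ Function.support f := hfpos.mono fun ω h => ne_of_gt h
    rw [ae_iff] at h1
    have h2 : (volume : Measure Ω) (Function.support f)ᶜ = 0 := by
      convert h1 using 2
      rfl
    have h3 : (1 : ENNReal) ≤ volume (Function.support f) := by
      calc (1 : ENNReal) = volume (univ : Set Ω) := (measure_univ).symm
        _ = volume ((Function.support f) ∪ (Function.support f)ᶜ) := by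
              rw [union_compl_self]
        _ ≤ volume (Function.support f) + volume (Function.support f)ᶜ :=
              measure_union_le _ _
        _ = volume (Function.support f) := by rw [h2, add_zero]
    exact lt_of_lt_of_le (by norm_num) h3
  have hμa : a < μ := by
    have h := key (fun ω => X ω - a) (hXint.sub (integrable_const a))
      (hX.mono fun ω h => by linarith [h.1])
    rw [integral_sub hXint (integrable_const a), integral_const, hmean] at h
    simp only [probReal_univ, measure_univ, ENNReal.toReal_one, one_smul] at h
    linarith
  have hμb : μ < b := by
    have h := key (fun ω => b - X ω) ((integrable_const b).sub hXint)
      (hX.mono fun ω h => by linarith [h.2])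
    rw [integral_sub (integrable_const b) hXint, integral_const, hmean] at h
    simp only [probReal_univ, measure_univ, ENNReal.toReal_one, one_smul] at h
    linarith
  have hμ : 0 < μ := ha.trans hμa
  have hb : 0 < b := ha.trans hab
  have hb0 : b ≠ 0 := ne_of_gt hb
  have ha0 : a ≠ 0 := ne_of_gt ha
  have hμ0 : μ ≠ 0 := ne_of_gt hμ
  have hμ2 : (0:ℝ) < μ^2 := by positivity
  -- integrable auxiliary function g = X - 2μ + μ² X⁻¹, equal to (X-μ)²/X
  have hg_int : Integrable (fun ω => X ω - 2*μ + μ^2 * (X ω)⁻¹) :=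
    (hXint.sub (integrable_const _)).add (hinv.const_mul _)
  have hg_eq : ∫ ω, (X ω - 2*μ + μ^2 * (X ω)⁻¹) = μ - 2*μ + μ^2 * I := by
    have h1 : ∫ ω, (X ω - 2*μ) = μ - 2*μ := by
      rw [integral_sub hXint (integrable_const _), integral_const, hmean]
      simp
    have hfi : Integrable (fun ω => X ω - 2*μ) := hXint.sub (integrable_const _)
    have hgi : Integrable (fun ω => μ^2 * (X ω)⁻¹) := hinv.const_mul _
    rw [integral_add hfi hgi, h1, integral_const_mul, ← hI]
  -- a.e. pointwise bounds
  have hub : ∀ᵐ ω, (X ω - 2*μ + μ^2 * (X ω)⁻¹) ≤ (X ω - μ)^2 * a⁻¹ := by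
    filter_upwards [hX] with ω hω
    have hx0 : 0 < X ω := lt_trans ha hω.1
    have hkey : X ω - 2*μ + μ^2 * (X ω)⁻¹ = (X ω - μ)^2 * (X ω)⁻¹ := by
      field_simp; ring
    rw [hkey]
    exact mul_le_mul_of_nonneg_left (inv_anti₀ ha hω.1.le) (sq_nonneg _)
  have hlb : ∀ᵐ ω, (X ω - μ)^2 * b⁻¹ ≤ (X ω - 2*μ + μ^2 * (X ω)⁻¹) := by
    filter_upwards [hX] with ω hω
    have hx0 : 0 < X ω := lt_trans ha hω.1
    have hkey : X ω - 2*μ + μ^2 * (X ω)⁻¹ = (X ω - μ)^2 * (X ω)⁻¹ := by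
      field_simp; ring
    rw [hkey]
    exact mul_le_mul_of_nonneg_left (inv_anti₀ hx0 hω.2.le) (sq_nonneg _)
  -- integrated bounds
  have hU : μ^2 * I - μ ≤ V * a⁻¹ := by
    have h := integral_mono_ae hg_int (hVar_int.mul_const _) hub
    rw [hg_eq, integral_mul_const] at h
    rw [← hV] at h
    linarith
  have hL : V * b⁻¹ ≤ μ^2 * I - μ := by
    have h := integral_mono_ae (hVar_int.mul_const _) hg_int hlb
    rw [hg_eq, integral_mul_const] at h
    rw [← hV] at h
    linarith
  -- rewrite the h-coefficients
  have haμ : a - μ ≠ 0 := by linarith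
  have hbμ : b - μ ≠ 0 := by linarith
  have hea : (a⁻¹ - μ⁻¹) / (a - μ) ^ 2 + μ⁻¹ ^ 2 / (a - μ) = (a*μ^2)⁻¹ := by
    field_simp
    ring
  have heb : (b⁻¹ - μ⁻¹) / (b - μ) ^ 2 + μ⁻¹ ^ 2 / (b - μ) = (b*μ^2)⁻¹ := by
    field_simp
    ring
  rw [hea, heb]
  -- translate bounds to bounds on I
  have hIle : I ≤ μ⁻¹ + (a*μ^2)⁻¹ * V := by
    have h2 : μ^2 * I ≤ μ^2 * (μ⁻¹ + (a*μ^2)⁻¹ * V) := by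
      have heq : μ^2 * (μ⁻¹ + (a*μ^2)⁻¹ * V) = μ + V * a⁻¹ := by
        field_simp
      rw [heq]; linarith
    exact le_of_mul_le_mul_left h2 hμ2
  have hIge : μ⁻¹ + (b*μ^2)⁻¹ * V ≤ I := by
    have h2 : μ^2 * (μ⁻¹ + (b*μ^2)⁻¹ * V) ≤ μ^2 * I := by
      have heq : μ^2 * (μ⁻¹ + (b*μ^2)⁻¹ * V) = μ + V * b⁻¹ := by
        field_simp
      rw [heq]; linarith
    exact le_of_mul_le_mul_left h2 hμ2
  have hbpos : (0:ℝ) < μ⁻¹ + (b*μ^2)⁻¹ * V := by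
    have h1 : (0:ℝ) < μ⁻¹ := inv_pos.mpr hμ
    have h2 : (0:ℝ) ≤ (b*μ^2)⁻¹ * V := by
      apply mul_nonneg _ hVnn
      positivity
    linarith
  have hIpos : 0 < I := lt_of_lt_of_le hbpos hIge
  constructor
  · exact inv_anti₀ hIpos hIle
  · exact inv_anti₀ hbpos hIge
end

section
/- Let θ̂ be a random variable with P(θ̂ ∈ (a,b)) = 1, T a sub-σ-algebra, θ̂* = E[θ̂|T], and L : (a,b) → ℝ twice differentiable with L'' ≥ 2c on (a,b) for some constant c ≥ 0. Then E[L(θ̂)] - E[L(θ̂*)] ≥ c · E[Var(θ̂ | T)]. -/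
open MeasureTheory Set Filter

/-- Tangent line inequality for a convex differentiable function. -/
lemma RB_tangent_le {S : Set ℝ} {f : ℝ → ℝ} (hfc : ConvexOn ℝ S f) {x y : ℝ}
    (hx : x ∈ S) (hy : y ∈ S) (hd : DifferentiableAt ℝ f y) :
    f y + deriv f y * (x - y) ≤ f x := by
  rcases lt_trichotomy x y with h | h | h
  · have hs := hfc.slope_le_deriv hx hy h hd
    rw [slope_def_field] at hs
    have hxy : 0 < y - x := by linarith
    rw [div_le_iff₀ hxy] at hs
    nlinarith
  · simp [h]
  · have hs := hfc.deriv_le_slope hy hx h hd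
    rw [slope_def_field] at hs
    have hxy : 0 < x - y := by linarith
    rw [le_div_iff₀ hxy] at hs
    nlinarith

/-- If tangent-line values at rationals near `x` are all `≤ M`, so is `f x`. -/
lemma RB_sup_tangent {a b : ℝ} {f D : ℝ → ℝ} {x M : ℝ} (hx : x ∈ Ioo a b)
    (hf : ContinuousAt f x) (hD : ContinuousAt D x)
    (h : ∀ q : ℚ, (q : ℝ) ∈ Ioo a b → f q + D q * (x - q) ≤ M) : f x ≤ M := by
  by_contra h'
  push_neg at h'
  set φ : ℝ → ℝ := fun y => f y + D y * (x - y) with hφdef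
  have hφ : ContinuousAt φ x := hf.add (hD.mul (continuousAt_const.sub continuousAt_id))
  have hφx : φ x = f x := by simp [hφdef]
  have h1 : ∀ᶠ y in nhds x, M < φ y := by
    refine hφ.eventually ?_
    rw [hφx]
    exact eventually_gt_nhds h'
  have h2 : ∀ᶠ y in nhds x, y ∈ Ioo a b := Ioo_mem_nhds hx.1 hx.2
  obtain ⟨ε, hε, hsub⟩ := Metric.mem_nhds_iff.1 (h1.and h2)
  obtain ⟨q, hq1, hq2⟩ := exists_rat_btwn (sub_lt_self x hε)
  have hqball : (q : ℝ) ∈ Metric.ball x ε := by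
    rw [Metric.mem_ball, Real.dist_eq, abs_lt]; constructor <;> linarith
  obtain ⟨hgt, hmem⟩ := hsub hqball
  exact absurd (h q hmem) (not_le.2 hgt)

lemma RB_deriv_eq {a b c : ℝ} {L : ℝ → ℝ}
    (hdiff : ∀ x ∈ Ioo a b, DifferentiableAt ℝ L x ∧ DifferentiableAt ℝ (deriv L) x)
    {x : ℝ} (hx : x ∈ Ioo a b) :
    deriv (fun y => L y - c * y ^ 2) x = deriv L x - 2 * c * x := by
  have h := ((hdiff x hx).1.hasDerivAt.sub
    (((hasDerivAt_pow 2 x).const_mul c))).deriv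
  have h' : deriv (fun y => L y - c * y ^ 2) x = _ := h
  rw [h', show (2:ℕ) - 1 = 1 from rfl]; push_cast; ring

lemma RB_convexOn {a b c : ℝ} (hc : 0 ≤ c) {L : ℝ → ℝ}
    (hdiff : ∀ x ∈ Ioo a b, DifferentiableAt ℝ L x ∧ DifferentiableAt ℝ (deriv L) x)
    (hL'' : ∀ x ∈ Ioo a b, 2 * c ≤ deriv (deriv L) x) :
    ConvexOn ℝ (Ioo a b) (fun y => L y - c * y ^ 2) := by
  set f : ℝ → ℝ := fun y => L y - c * y ^ 2 with hf
  have hfd : ∀ x ∈ Ioo a b, DifferentiableAt ℝ f x := fun x hx =>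
    (hdiff x hx).1.sub ((differentiableAt_pow 2).const_mul c)
  have hderiv2 : ∀ x ∈ Ioo a b, deriv (deriv f) x = deriv (deriv L) x - 2 * c := by
    intro x hx
    have hev : deriv f =ᶠ[nhds x] (fun y => deriv L y - 2 * c * y) :=
      eventuallyEq_of_mem (Ioo_mem_nhds hx.1 hx.2) (fun y hy => RB_deriv_eq hdiff hy)
    rw [hev.deriv_eq]
    have h2 : HasDerivAt (fun y => deriv L y - 2 * c * y) (deriv (deriv L) x - 2 * c) x := by
      exact ((hdiff x hx).2.hasDerivAt.sub ((hasDerivAt_id x).const_mul (2 * c))).congr_deriv (by ring)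
    exact h2.deriv
  have hfd2 : ∀ x ∈ Ioo a b, DifferentiableAt ℝ (deriv f) x := by
    intro x hx
    have hev : deriv f =ᶠ[nhds x] (fun y => deriv L y - 2 * c * y) :=
      eventuallyEq_of_mem (Ioo_mem_nhds hx.1 hx.2) (fun y hy => RB_deriv_eq hdiff hy)
    exact (((hdiff x hx).2.sub (((differentiableAt_id).const_mul (2 * c))))).congr_of_eventuallyEq hev
  have hcont : ContinuousOn f (Ioo a b) :=
    fun x hx => ((hfd x hx).continuousAt).continuousWithinAt
  have hd1 : DifferentiableOn ℝ f (interior (Ioo a b)) := by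
    intro x hx; rw [interior_Ioo] at hx; exact (hfd x hx).differentiableWithinAt
  have hd2 : DifferentiableOn ℝ (deriv f) (interior (Ioo a b)) := by
    intro x hx; rw [interior_Ioo] at hx; exact (hfd2 x hx).differentiableWithinAt
  have hnn : ∀ x ∈ interior (Ioo a b), 0 ≤ deriv^[2] f x := by
    intro x hx
    rw [interior_Ioo] at hx
    have := hL'' x hx
    have hit : deriv^[2] f x = deriv (deriv f) x := rfl
    rw [hit, hderiv2 x hx]
    linarith
  exact convexOn_of_deriv2_nonneg (convex_Ioo a b) hcont hd1 hd2 hnn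

lemma RB_null_of_le {Ω : Type*} (m : MeasurableSpace Ω) {m0 : MeasurableSpace Ω} (P : Measure Ω)
    [IsProbabilityMeasure P] (hm : m ≤ m0)
    {a : ℝ} {est : Ω → ℝ} (hbound : ∀ᵐ ω ∂P, a < est ω) (hint : Integrable est P) :
    P {ω | (P[est|m]) ω ≤ a} = 0 := by
  set A : Set Ω := {ω | (P[est|m]) ω ≤ a} with hAdef
  have hAm : MeasurableSet[m] A :=
    measurableSet_le stronglyMeasurable_condExp.measurable measurable_const
  have hA : MeasurableSet[m0] A := hm _ hAm
  have h1 : ∫ ω in A, est ω ∂P = ∫ ω in A, (P[est|m]) ω ∂P :=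
    (setIntegral_condExp hm hint hAm).symm
  have hconst : IntegrableOn (fun _ : Ω => a) A P :=
    (integrable_const a).integrableOn
  have h2 : ∫ ω in A, (P[est|m]) ω ∂P ≤ ∫ _ in A, a ∂P :=
    setIntegral_mono_on integrable_condExp.integrableOn hconst hA (fun ω hω => hω)
  have hle : ∫ ω in A, (est ω - a) ∂P ≤ 0 := by
    rw [integral_sub hint.integrableOn hconst]
    linarith [h1, h2]
  have hnn : 0 ≤ᵐ[P.restrict A] fun ω => est ω - a :=
    ae_restrict_of_ae (hbound.mono fun ω h => sub_nonneg.2 h.le)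
  have heq0 : ∫ ω in A, (est ω - a) ∂P = 0 :=
    le_antisymm hle (integral_nonneg_of_ae hnn)
  have hzero : (fun ω => est ω - a) =ᵐ[P.restrict A] 0 :=
    (integral_eq_zero_iff_of_nonneg_ae hnn (hint.integrableOn.sub hconst)).1 heq0
  have hpos : ∀ᵐ ω ∂P.restrict A, 0 < est ω - a :=
    ae_restrict_of_ae (hbound.mono fun ω h => sub_pos.2 h)
  have hfalse : ∀ᵐ _ ∂P.restrict A, False := by
    filter_upwards [hzero, hpos] with ω h1 h2
    rw [Pi.zero_apply] at h1
    linarith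
  rw [ae_iff] at hfalse
  simpa [Measure.restrict_apply_univ] using hfalse

lemma RB_condexp_mem {Ω : Type*} (m : MeasurableSpace Ω) {m0 : MeasurableSpace Ω} (P : Measure Ω)
    [IsProbabilityMeasure P] (hm : m ≤ m0)
    {a b : ℝ} {est : Ω → ℝ} (hbound : ∀ᵐ ω ∂P, est ω ∈ Ioo a b)
    (hint : Integrable est P) :
    ∀ᵐ ω ∂P, (P[est|m]) ω ∈ Ioo a b := by
  have h1 : P {ω | (P[est|m]) ω ≤ a} = 0 :=
    RB_null_of_le m P hm (hbound.mono fun ω h => h.1) hint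
  have h2 : P {ω | (P[(fun ω => -est ω)|m]) ω ≤ -b} = 0 :=
    RB_null_of_le m P hm (hbound.mono fun ω h => neg_lt_neg h.2) hint.neg
  have hneg : (P[(fun ω => -est ω)|m]) =ᵐ[P] fun ω => -((P[est|m]) ω) := by
    exact condExp_neg (μ := P) (m := m) est
  have h2' : ∀ᵐ ω ∂P, (P[est|m]) ω < b := by
    have hb : ∀ᵐ ω ∂P, ¬ (P[(fun ω => -est ω)|m]) ω ≤ -b := (ae_iff).2 (by simpa using h2)
    filter_upwards [hb, hneg] with ω hω he
    rw [he] at hω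
    push_neg at hω
    linarith
  have h1' : ∀ᵐ ω ∂P, a < (P[est|m]) ω := (ae_iff).2 (by simpa [not_lt] using h1)
  filter_upwards [h1', h2'] with ω ha hb
  exact ⟨ha, hb⟩

lemma RB_fd2 {a b c : ℝ} {L : ℝ → ℝ}
    (hdiff : ∀ x ∈ Ioo a b, DifferentiableAt ℝ L x ∧ DifferentiableAt ℝ (deriv L) x)
    {x : ℝ} (hx : x ∈ Ioo a b) :
    DifferentiableAt ℝ (deriv fun y => L y - c * y ^ 2) x := by
  have hev : (deriv fun y => L y - c * y ^ 2) =ᶠ[nhds x] (fun y => deriv L y - 2 * c * y) :=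
    eventuallyEq_of_mem (Ioo_mem_nhds hx.1 hx.2) (fun y hy => RB_deriv_eq hdiff hy)
  exact ((hdiff x hx).2.sub ((differentiableAt_id).const_mul (2 * c))).congr_of_eventuallyEq hev

lemma RB_main {Ω : Type*} (m : MeasurableSpace Ω) {m0 : MeasurableSpace Ω} (P : Measure Ω)
    [IsProbabilityMeasure P] (hm : m ≤ m0)
    (a b : ℝ) (hab : a < b) (est : Ω → ℝ)
    (hbound : ∀ᵐ ω ∂P, est ω ∈ Ioo a b)
    (hest : MemLp est 2 P)
    (L : ℝ → ℝ) (c : ℝ) (hc : 0 ≤ c)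
    (hdiff : ∀ x ∈ Ioo a b, DifferentiableAt ℝ L x ∧ DifferentiableAt ℝ (deriv L) x)
    (hL'' : ∀ x ∈ Ioo a b, 2 * c ≤ deriv (deriv L) x)
    (hint1 : Integrable (fun ω => L (est ω)) P)
    (hint2 : Integrable (fun ω => L ((P[est|m]) ω)) P) :
    (∫ ω, L (est ω) ∂P) - ∫ ω, L ((P[est|m]) ω) ∂P ≥
      c * ∫ ω, ((P[fun ω' => (est ω') ^ 2|m]) ω - ((P[est|m]) ω) ^ 2) ∂P := by
  set f : ℝ → ℝ := fun y => L y - c * y ^ 2 with hfdef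
  have hfc : ConvexOn ℝ (Ioo a b) f := RB_convexOn hc hdiff hL''
  have hfd : ∀ x ∈ Ioo a b, DifferentiableAt ℝ f x := fun x hx =>
    (hdiff x hx).1.sub ((differentiableAt_pow 2).const_mul c)
  have hint_est : Integrable est P := hest.integrable one_le_two
  have hint_sq : Integrable (fun ω => est ω ^ 2) P := hest.integrable_sq
  have hint_f : Integrable (fun ω => f (est ω)) P := hint1.sub (hint_sq.const_mul c)
  have hmem : ∀ᵐ ω ∂P, (P[est|m]) ω ∈ Ioo a b := RB_condexp_mem m P hm hbound hint_est
  have hstarmeas : AEStronglyMeasurable (P[est|m]) P :=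
    (stronglyMeasurable_condExp.mono hm).aestronglyMeasurable
  have hint_star_sq : Integrable (fun ω => ((P[est|m]) ω) ^ 2) P := by
    have hmeas : AEStronglyMeasurable (fun ω => ((P[est|m]) ω) ^ 2) P := by
      have := hstarmeas.mul hstarmeas
      exact this.congr (Filter.Eventually.of_forall fun ω => (pow_two _).symm)
    refine Integrable.mono' (integrable_const ((max |a| |b|) ^ 2)) hmeas ?_
    filter_upwards [hmem] with ω hω
    rw [Real.norm_eq_abs, abs_pow]
    refine pow_le_pow_left₀ (abs_nonneg _) ?_ 2
    rw [abs_le]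
    constructor
    · have : -(max |a| |b|) ≤ -|a| := neg_le_neg (le_max_left _ _)
      have h2 : -|a| ≤ a := neg_abs_le a
      linarith [hω.1]
    · have : |b| ≤ max |a| |b| := le_max_right _ _
      have h2 : b ≤ |b| := le_abs_self b
      linarith [hω.2]
  have hint_fstar : Integrable (fun ω => f ((P[est|m]) ω)) P :=
    hint2.sub (hint_star_sq.const_mul c)
  -- conditional Jensen via rational tangent lines
  have htangent : ∀ᵐ ω ∂P, ∀ q : ℚ, (q : ℝ) ∈ Ioo a b →
      f q + deriv f q * ((P[est|m]) ω - q) ≤ (P[fun ω => f (est ω)|m]) ω := by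
    rw [ae_all_iff]
    intro q
    by_cases hq : (q : ℝ) ∈ Ioo a b
    · set α : ℝ := f q - deriv f q * q with hα
      set β : ℝ := deriv f q with hβ
      have hptwise : (fun ω => α + β * est ω) ≤ᵐ[P] fun ω => f (est ω) := by
        filter_upwards [hbound] with ω hω
        have ht := RB_tangent_le hfc hω hq (hfd _ hq)
        have : α + β * est ω = f q + deriv f q * (est ω - q) := by rw [hα, hβ]; ring
        linarith
      have hint_aff : Integrable (fun ω => α + β * est ω) P :=
        (integrable_const α).add (hint_est.const_mul β)
      have hmono := condExp_mono (m := m) hint_aff hint_f hptwise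
      have haff : P[(fun ω => α + β * est ω)|m] =ᵐ[P] fun ω => α + β * (P[est|m]) ω := by
        have h1 := condExp_add (μ := P) (m := m) (integrable_const α) (hint_est.const_mul β)
        have h2 : P[(fun ω => β * est ω)|m] =ᵐ[P] fun ω => β * (P[est|m]) ω := by
          exact condExp_smul (μ := P) (m := m) β est
        have h3 : P[(fun _ : Ω => α)|m] = fun _ => α := condExp_const hm α
        have h0 : (fun ω => α + β * est ω) = (fun _ : Ω => α) + fun ω => β * est ω := rfl
        rw [h0]
        filter_upwards [h1, h2] with ω e1 e2
        rw [e1, Pi.add_apply, h3, e2]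
      filter_upwards [hmono, haff] with ω h1 h2
      have : α + β * ((P[est|m]) ω) = f q + deriv f q * ((P[est|m]) ω - q) := by
        rw [hα, hβ]; ring
      intro _
      rw [← this, ← h2]
      exact h1
    · exact Filter.Eventually.of_forall fun ω hmemq => absurd hmemq hq
  have hjensen : ∀ᵐ ω ∂P, f ((P[est|m]) ω) ≤ (P[fun ω => f (est ω)|m]) ω := by
    filter_upwards [htangent, hmem] with ω h1 h2
    exact RB_sup_tangent h2 (hfd _ h2).continuousAt (RB_fd2 hdiff h2).continuousAt h1
  have hInt : ∫ ω, f ((P[est|m]) ω) ∂P ≤ ∫ ω, f (est ω) ∂P := by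
    calc ∫ ω, f ((P[est|m]) ω) ∂P
        ≤ ∫ ω, (P[fun ω => f (est ω)|m]) ω ∂P :=
          integral_mono_ae hint_fstar integrable_condExp hjensen
      _ = ∫ ω, f (est ω) ∂P := integral_condExp hm (f := fun ω => f (est ω))
  have hsplit1 : ∫ ω, f (est ω) ∂P
      = (∫ ω, L (est ω) ∂P) - c * ∫ ω, est ω ^ 2 ∂P := by
    rw [show (fun ω => f (est ω)) = fun ω => L (est ω) - c * est ω ^ 2 from rfl,
      integral_sub hint1 (hint_sq.const_mul c), integral_const_mul]
  have hsplit2 : ∫ ω, f ((P[est|m]) ω) ∂P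
      = (∫ ω, L ((P[est|m]) ω) ∂P) - c * ∫ ω, ((P[est|m]) ω) ^ 2 ∂P := by
    rw [show (fun ω => f ((P[est|m]) ω))
        = fun ω => L ((P[est|m]) ω) - c * ((P[est|m]) ω) ^ 2 from rfl,
      integral_sub hint2 (hint_star_sq.const_mul c), integral_const_mul]
  have hRHS : ∫ ω, ((P[fun ω' => (est ω') ^ 2|m]) ω - ((P[est|m]) ω) ^ 2) ∂P
      = (∫ ω, est ω ^ 2 ∂P) - ∫ ω, ((P[est|m]) ω) ^ 2 ∂P := by
    rw [integral_sub integrable_condExp hint_star_sq,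
      integral_condExp hm (f := fun ω => est ω ^ 2)]
  rw [ge_iff_le, hRHS, mul_sub]
  linarith [hInt, hsplit1, hsplit2]



open MeasureTheory Set

/-- Sharpened Rao–Blackwell: if the loss `L` is twice differentiable with `L'' ≥ 2c ≥ 0`
on `(a,b)` and `θ̂*` is the conditional expectation of `θ̂`, then
`E[L(θ̂)] - E[L(θ̂*)] ≥ c · E[Var(θ̂|T)]`. -/
theorem stmt_17 {Ω : Type*} {m0 : MeasurableSpace Ω} (P : Measure Ω)
    [IsProbabilityMeasure P]
    (m : MeasurableSpace Ω) (hm : m ≤ m0)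
    (a b : ℝ) (hab : a < b) (est : Ω → ℝ)
    (hbound : ∀ᵐ ω ∂P, est ω ∈ Ioo a b)
    (hest : MemLp est 2 P)
    (L : ℝ → ℝ) (c : ℝ) (hc : 0 ≤ c)
    (hdiff : ∀ x ∈ Ioo a b, DifferentiableAt ℝ L x ∧ DifferentiableAt ℝ (deriv L) x)
    (hL'' : ∀ x ∈ Ioo a b, 2 * c ≤ deriv (deriv L) x)
    (hint1 : Integrable (fun ω => L (est ω)) P)
    (hint2 : Integrable (fun ω => L ((P[est|m]) ω)) P) :
    (∫ ω, L (est ω) ∂P) - ∫ ω, L ((P[est|m]) ω) ∂P ≥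
      c * ∫ ω, ((P[fun ω' => (est ω') ^ 2|m]) ω - ((P[est|m]) ω) ^ 2) ∂P := by
  exact RB_main m P hm a b hab est hbound hest L c hc hdiff hL'' hint1 hint2
end

section
/- Let X be a random variable supported on (a,b), φ twice differentiable and convex on (a,b). Suppose there exists an interval I ⊂ (a,b) with inf_{x∈I} φ''(x) > 0, P(X ∈ I) > 0, and Var(X | X ∈ I) > 0. Then E[φ(X)] - φ(E[X]) > 0 (the Jensen gap is strictly positive). -/
open MeasureTheory Set


-- helper: a.e. positive implies positive integral (probability measure)
lemma helper_int_pos {Ω : Type*} [MeasureSpace Ω] [IsProbabilityMeasure (volume : Measure Ω)]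
    {f : Ω → ℝ} (hf : Integrable f) (h : ∀ᵐ ω, 0 < f ω) : 0 < ∫ ω, f ω := by
  rw [integral_pos_iff_support_of_nonneg_ae (h.mono fun ω hω => hω.le) hf]
  by_contra hc
  push_neg at hc
  have h0 : volume (Function.support f) = 0 := le_antisymm hc bot_le
  have h1 : ∀ᵐ ω, ω ∉ Function.support f := measure_eq_zero_iff_ae_notMem.mp h0
  have : ∀ᵐ (ω : Ω), False := by
    filter_upwards [h, h1] with ω hω h1ω
    exact h1ω (by simp [Function.mem_support]; positivity)
  have := ae_iff.mp this
  simp at this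


lemma helper_tangent {a b : ℝ} {φ : ℝ → ℝ} (hconv : ConvexOn ℝ (Ioo a b) φ)
    {m y : ℝ} (hm : m ∈ Ioo a b) (hy : y ∈ Ioo a b)
    (hd : DifferentiableAt ℝ φ m) :
    φ m + deriv φ m * (y - m) ≤ φ y := by
  rcases lt_trichotomy y m with h | h | h
  · have h1 := hconv.slope_le_deriv hy hm h hd
    rw [slope_def_field] at h1
    rw [div_le_iff₀ (show (0:ℝ) < m - y by linarith)] at h1
    nlinarith
  · simp [h]
  · have h1 := hconv.deriv_le_slope hm hy h hd
    rw [slope_def_field] at h1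
    rw [le_div_iff₀ (show (0:ℝ) < y - m by linarith)] at h1
    nlinarith
    
lemma helper_zero_unique {a b : ℝ} {φ : ℝ → ℝ} (hconv : ConvexOn ℝ (Ioo a b) φ)
    {I : Set ℝ} (hI : I ⊆ Ioo a b) (hIconn : I.OrdConnected)
    {δ : ℝ} (hδ : 0 < δ) (hφ'' : ∀ x ∈ I, δ ≤ deriv (deriv φ) x)
    {c d : ℝ}
    (hge : ∀ t ∈ Ioo a b, c * t + d ≤ φ t)
    {x y : ℝ} (hx : x ∈ I) (hy : y ∈ I)
    (hφx : φ x = c * x + d) (hφy : φ y = c * y + d) : x = y := by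
  by_contra hne
  wlog hxy : x < y generalizing x y
  · exact this hy hx hφy hφx (Ne.symm hne)
      (lt_of_le_of_ne (not_lt.mp hxy) (Ne.symm hne))
  have hIcc : Icc x y ⊆ I := hIconn.out hx hy
  have heq : ∀ t ∈ Icc x y, φ t = c * t + d := by
    intro t ht
    refine le_antisymm ?_ (hge t (hI (hIcc ht)))
    obtain ⟨ht1, ht2⟩ := ht
    set s := (t - x) / (y - x) with hs
    have hyx : (0:ℝ) < y - x := by linarith
    have hs0 : 0 ≤ s := by apply div_nonneg <;> linarith
    have hs1 : s ≤ 1 := by rw [div_le_one hyx]; linarith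
    have hts : (1 - s) * x + s * y = t := by
      have h' : s * (y - x) = t - x := by rw [hs]; exact div_mul_cancel₀ _ hyx.ne'
      linear_combination h'
    have hcv := hconv.2 (hI hx) (hI hy) (by linarith : (0:ℝ) ≤ 1 - s) hs0 (by ring)
    simp only [smul_eq_mul, hts] at hcv
    rw [hφx, hφy] at hcv
    calc φ t ≤ (1 - s) * (c * x + d) + s * (c * y + d) := hcv
      _ = c * ((1-s)*x + s*y) + d := by ring
      _ = c * t + d := by rw [hts]
  have hderiv : ∀ t ∈ Ioo x y, deriv φ t = c := by
    intro t ht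
    have hev : φ =ᶠ[nhds t] (fun u => c * u + d) :=
      Filter.eventuallyEq_of_mem (isOpen_Ioo.mem_nhds ht)
        (fun u hu => heq u (Ioo_subset_Icc_self hu))
    rw [hev.deriv_eq]
    have hh : HasDerivAt (fun u => c * u + d) c t := by
      simpa using ((hasDerivAt_id t).const_mul c).add_const d
    exact hh.deriv
  set w := (x + y) / 2 with hw
  have hwmem : w ∈ Ioo x y := ⟨by simp [hw]; linarith, by simp [hw]; linarith⟩
  have hev2 : deriv φ =ᶠ[nhds w] (fun _ => c) :=
    Filter.eventuallyEq_of_mem (isOpen_Ioo.mem_nhds hwmem) hderiv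
  have h0 : deriv (deriv φ) w = 0 := by rw [hev2.deriv_eq]; simp
  have := hφ'' w (hIcc (Ioo_subset_Icc_self hwmem))
  rw [h0] at this; linarith

/-- Strict positivity of the Jensen gap: if `φ` is convex and twice differentiable on
`(a,b)`, and there is an interval `I ⊆ (a,b)` on which `φ''` is bounded below by a
positive constant, with `P(X ∈ I) > 0` and positive conditional variance of `X` given
`X ∈ I`, then `E[φ(X)] - φ(E[X]) > 0`. -/
theorem stmt_18 {Ω : Type*} [MeasureSpace Ω] [IsProbabilityMeasure (volume : Measure Ω)]
    (a b : ℝ) (hab : a < b) (X : Ω → ℝ) (hXmeas : Measurable X)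
    (hX : ∀ᵐ ω, X ω ∈ Ioo a b)
    (hXint : Integrable X)
    (φ : ℝ → ℝ)
    (hφint : Integrable (fun ω => φ (X ω)))
    (hconv : ConvexOn ℝ (Ioo a b) φ)
    (hdiff : ∀ x ∈ Ioo a b, DifferentiableAt ℝ φ x ∧ DifferentiableAt ℝ (deriv φ) x)
    (I : Set ℝ) (hI : I ⊆ Ioo a b) (hIconn : I.OrdConnected) (hImeas : MeasurableSet I)
    (δ : ℝ) (hδ : 0 < δ) (hφ'' : ∀ x ∈ I, δ ≤ deriv (deriv φ) x)
    (hpos : 0 < volume (X ⁻¹' I))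
    (hvar : 0 < (∫ ω in X ⁻¹' I, (X ω) ^ 2) / (volume (X ⁻¹' I)).toReal -
      ((∫ ω in X ⁻¹' I, X ω) / (volume (X ⁻¹' I)).toReal) ^ 2) :
    0 < (∫ ω, φ (X ω)) - φ (∫ ω, X ω) := by
  set S : Set Ω := X ⁻¹' I with hSdef
  have hSmeas : MeasurableSet S := hXmeas hImeas
  set m : ℝ := ∫ ω, X ω with hmdef
  have hma : a < m := by
    have h2 : Integrable (fun ω => X ω - a) := hXint.sub (integrable_const a)
    have hp := helper_int_pos h2 (hX.mono fun ω h => by simp only [sub_pos]; exact h.1)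
    rw [integral_sub hXint (integrable_const a), integral_const] at hp
    simp at hp; linarith
  have hmb : m < b := by
    have h2 : Integrable (fun ω => b - X ω) := (integrable_const b).sub hXint
    have hp := helper_int_pos h2 (hX.mono fun ω h => by simp only [sub_pos]; exact h.2)
    rw [integral_sub (integrable_const b) hXint, integral_const] at hp
    simp at hp; linarith
  have hmI : m ∈ Ioo a b := ⟨hma, hmb⟩
  set c : ℝ := deriv φ m with hcdef
  set d : ℝ := φ m - c * m with hddef
  have hge : ∀ t ∈ Ioo a b, c * t + d ≤ φ t := by
    intro t ht
    have := helper_tangent hconv hmI ht (hdiff m hmI).1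
    rw [hddef]; linarith
  set ψ : ℝ → ℝ := fun t => φ t - (c * t + d) with hψ
  have hψfun : (fun ω => ψ (X ω)) = fun ω => φ (X ω) - (c * X ω + d) := rfl
  have hψint : Integrable (fun ω => ψ (X ω)) := by
    rw [hψfun]; exact hφint.sub (show Integrable (fun ω => c * X ω + d) volume from (hXint.const_mul c).add (integrable_const d))
  have hψ0 : ∀ᵐ ω, 0 ≤ ψ (X ω) := hX.mono fun ω h => by
    simp only [hψ, sub_nonneg]; exact hge _ h
  have hkey : ∫ ω, ψ (X ω) = (∫ ω, φ (X ω)) - φ m := by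
    rw [hψfun, integral_sub hφint (show Integrable (fun ω => c * X ω + d) volume from (hXint.const_mul c).add (integrable_const d)),
        integral_add (hXint.const_mul c) (integrable_const d),
        integral_const_mul, integral_const]
    simp [hddef, ← hmdef]
  have hle : ∫ ω in S, ψ (X ω) ≤ ∫ ω, ψ (X ω) := setIntegral_le_integral hψint hψ0
  suffices hSpos : 0 < ∫ ω in S, ψ (X ω) by linarith
  by_contra hc
  push_neg at hc
  have hz : ∫ ω in S, ψ (X ω) = 0 :=
    le_antisymm hc (integral_nonneg_of_ae (ae_restrict_of_ae hψ0))
  have hψzero : (fun ω => ψ (X ω)) =ᵐ[volume.restrict S] 0 :=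
    (setIntegral_eq_zero_iff_of_nonneg_ae (ae_restrict_of_ae hψ0) hψint.integrableOn).mp hz
  have hmemS : ∀ᵐ ω ∂(volume.restrict S), X ω ∈ I := ae_restrict_mem hSmeas
  by_cases hT : ∃ z ∈ I, ψ z = 0
  · obtain ⟨z, hzI, hz0⟩ := hT
    have hXz : ∀ᵐ ω ∂(volume.restrict S), X ω = z := by
      filter_upwards [hmemS, hψzero] with ω h1 h2
      have h2' : φ (X ω) = c * X ω + d := by
        have : ψ (X ω) = 0 := h2
        simp only [hψ] at this; linarith
      have hz0' : φ z = c * z + d := by simp only [hψ] at hz0; linarith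
      exact helper_zero_unique hconv hI hIconn hδ hφ'' hge h1 hzI h2' hz0'
    have hint1 : ∫ ω in S, X ω = (volume S).toReal * z := by
      rw [integral_congr_ae hXz, setIntegral_const, smul_eq_mul]; rfl
    have hint2 : ∫ ω in S, (X ω) ^ 2 = (volume S).toReal * z ^ 2 := by
      rw [integral_congr_ae (hXz.mono fun ω h => by rw [h]), setIntegral_const, smul_eq_mul]; rfl
    have hp0 : (0:ℝ) < (volume S).toReal := ENNReal.toReal_pos hpos.ne' (measure_ne_top _ _)
    rw [hint1, hint2] at hvar
    have e1 : (volume S).toReal * z ^ 2 / (volume S).toReal = z ^ 2 := by field_simp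
    have e2 : (volume S).toReal * z / (volume S).toReal = z := by field_simp
    rw [e1, e2] at hvar
    simp at hvar
  · push_neg at hT
    have hfalse : ∀ᵐ ω ∂(volume.restrict S), False := by
      filter_upwards [hmemS, hψzero] with ω h1 h2
      exact hT (X ω) h1 h2
    rw [ae_iff] at hfalse
    simp only [not_false_eq_true, setOf_true, Measure.restrict_apply_univ] at hfalse
    exact hpos.ne' hfalse
end
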